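/- arXiv:2407.05488 — 4 statements merged into one kernel-verified Lean document; each statement's English description precedes it below -/
import Mathlib

section
/- Let T>0, let η:[0,T]→[0,∞) be absolutely continuous with η(0)=η₀≥0, let φ,ψ,y:[0,T]→[0,∞) be Lebesgue integrable, and let b,c>0 be real constants. Suppose η'(t) + b·y(t) ≤ (c·y(t) + φ(t))·η(t) + ψ(t) for almost every t∈[0,T]. Set Φ(s) := ∫₀ˢ φ(τ)dτ. If D := η₀ + ∫₀ᵀ e^{−Φ(τ)} ψ(τ) dτ < (b/c)·e^{−1−Φ(T)}, then sup_{0≤τ≤T} η(τ) < b/c and ∫₀ᵀ y(τ)dτ < 1/c. -/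
open MeasureTheory intervalIntegral Set

lemma lemA {t : ℝ} (g : ℝ → ℝ) (hg : IntervalIntegrable g volume 0 t)
    (hg0 : ∀ u ∈ Set.Icc (0:ℝ) t, 0 ≤ g u) {s : ℝ} (hs0 : 0 ≤ s) (hst : s ≤ t) :
    ∫ u in s..t, g u * Real.exp (-(∫ v in (0:ℝ)..u, g v))
      = Real.exp (-(∫ v in (0:ℝ)..s, g v)) - Real.exp (-(∫ v in (0:ℝ)..t, g v)) := by
  have ht0 : (0:ℝ) ≤ t := hs0.trans hst
  set G : ℝ → ℝ := fun u => ∫ v in (0:ℝ)..u, g v with hGdef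
  show (∫ u in s..t, g u * Real.exp (-(G u))) = Real.exp (-(G s)) - Real.exp (-(G t))
  have hUsub : ∀ {a b : ℝ}, a ∈ Set.Icc (0:ℝ) t → b ∈ Set.Icc (0:ℝ) t →
      Set.uIcc a b ⊆ Set.Icc 0 t := by
    intro a b ha hb
    rw [← Set.uIcc_of_le ht0]
    exact Set.uIcc_subset_uIcc (by rwa [Set.uIcc_of_le ht0]) (by rwa [Set.uIcc_of_le ht0])
  have hsub : ∀ {a b : ℝ}, a ∈ Set.Icc (0:ℝ) t → b ∈ Set.Icc (0:ℝ) t →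
      IntervalIntegrable g volume a b := by
    intro a b ha hb
    refine hg.mono_set ?_
    rw [Set.uIcc_of_le ht0]
    exact hUsub ha hb
  have hGsub : ∀ {a b : ℝ}, a ∈ Set.Icc (0:ℝ) t → b ∈ Set.Icc (0:ℝ) t → a ≤ b →
      G b - G a = ∫ v in a..b, g v := by
    intro a b ha hb _
    rw [hGdef]
    exact integral_interval_sub_left (hsub (Set.left_mem_Icc.2 ht0) hb)
      (hsub (Set.left_mem_Icc.2 ht0) ha)
  have hGmono : ∀ {a b : ℝ}, a ∈ Set.Icc (0:ℝ) t → b ∈ Set.Icc (0:ℝ) t → a ≤ b →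
      G a ≤ G b := by
    intro a b ha hb hab
    have h1 : 0 ≤ ∫ v in a..b, g v :=
      intervalIntegral.integral_nonneg hab (fun u hu => hg0 u ⟨ha.1.trans hu.1, hu.2.trans hb.2⟩)
    have := hGsub ha hb hab
    linarith
  have hGnonneg : ∀ {a : ℝ}, a ∈ Set.Icc (0:ℝ) t → 0 ≤ G a := by
    intro a ha
    have h0 : G (0:ℝ) = 0 := integral_same
    have := hGmono (Set.left_mem_Icc.2 ht0) ha ha.1
    linarith
  have hGcont : ContinuousOn G (Set.Icc 0 t) := by
    have : IntegrableOn g (Set.Icc 0 t) volume :=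
      (intervalIntegrable_iff_integrableOn_Icc_of_le ht0).mp hg
    have h2 := intervalIntegral.continuousOn_primitive_interval
      (f := g) (μ := volume) (a := 0) (b := t) (by rwa [Set.uIcc_of_le ht0])
    rwa [Set.uIcc_of_le ht0] at h2
  have hEcont : ContinuousOn (fun u => Real.exp (-(G u))) (Set.Icc 0 t) :=
    Real.continuous_exp.comp_continuousOn hGcont.neg
  have hgE : ∀ {a b : ℝ}, a ∈ Set.Icc (0:ℝ) t → b ∈ Set.Icc (0:ℝ) t →
      IntervalIntegrable (fun u => g u * Real.exp (-(G u))) volume a b := by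
    intro a b ha hb
    exact (hsub ha hb).mul_continuousOn (hEcont.mono (hUsub ha hb))
  have hsmem : s ∈ Set.Icc (0:ℝ) t := ⟨hs0, hst⟩
  have htmem : t ∈ Set.Icc (0:ℝ) t := ⟨ht0, le_rfl⟩
  rcases eq_or_lt_of_le (hGmono hsmem htmem hst) with heq | hlt
  · -- G s = G t : both sides are 0
    rw [heq, sub_self]
    have hle : (∫ u in s..t, g u * Real.exp (-(G u))) ≤ ∫ u in s..t, g u := by
      refine intervalIntegral.integral_mono_on hst (hgE hsmem htmem) (hsub hsmem htmem) ?_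
      intro x hx
      have hxm : x ∈ Set.Icc (0:ℝ) t := ⟨hs0.trans hx.1, hx.2⟩
      have h1 : Real.exp (-(G x)) ≤ 1 := by
        rw [Real.exp_le_one_iff]; linarith [hGnonneg hxm]
      nlinarith [hg0 x hxm]
    have hge : 0 ≤ ∫ u in s..t, g u * Real.exp (-(G u)) := by
      refine intervalIntegral.integral_nonneg hst ?_
      intro x hx
      have hxm : x ∈ Set.Icc (0:ℝ) t := ⟨hs0.trans hx.1, hx.2⟩
      exact mul_nonneg (hg0 x hxm) (Real.exp_nonneg _)
    have h2 : (∫ u in s..t, g u) = G t - G s := (hGsub hsmem htmem hst).symm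
    rw [heq, sub_self] at h2
    linarith
  · -- main case : G s < G t, partition argument
    set Δ : ℝ := G t - G s with hΔdef
    have hΔ : 0 < Δ := by simp only [hΔdef]; linarith
    have hIcc0 : ∀ {x : ℝ}, x ∈ Set.Icc s t → x ∈ Set.Icc (0:ℝ) t :=
      fun hx => ⟨hs0.trans hx.1, hx.2⟩
    have key : ∀ N : ℕ, 0 < N →
        |(∫ u in s..t, g u * Real.exp (-(G u))) -
          (Real.exp (-(G s)) - Real.exp (-(G t)))| ≤ Δ / N := by
      intro N hN
      have hNR : (0:ℝ) < N := Nat.cast_pos.mpr hN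
      set d : ℝ := Δ / N with hddef
      have hd : 0 < d := div_pos hΔ hNR
      have hNd : (N:ℝ) * d = Δ := by rw [hddef]; field_simp
      set r : ℕ → ℝ := fun i => G s + i * d with hrdef
      have hrstep : ∀ i : ℕ, r (i+1) = r i + d := by
        intro i; simp only [hrdef]; push_cast; ring
      have hchoice : ∀ i : ℕ, ∃ u, u ∈ Set.Icc s t ∧ G u = r (min i N) := by
        intro i
        have hmem : r (min i N) ∈ Set.Icc (G s) (G t) := by
          constructor
          · simp only [hrdef]
            have : (0:ℝ) ≤ (min i N : ℕ) := Nat.cast_nonneg _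
            nlinarith
          · simp only [hrdef]
            have h1 : ((min i N : ℕ) : ℝ) ≤ (N:ℝ) := Nat.cast_le.mpr (min_le_right _ _)
            nlinarith
        have := intermediate_value_Icc hst (hGcont.mono (Set.Icc_subset_Icc hs0 le_rfl)) hmem
        obtain ⟨u, hu1, hu2⟩ := this
        exact ⟨u, hu1, hu2⟩
      choose w hw1 hw2 using hchoice
      set v : ℕ → ℝ := fun i => if i = 0 then s else if N ≤ i then t else w i with hvdef
      have hvmem : ∀ i, v i ∈ Set.Icc s t := by
        intro i; simp only [hvdef]
        split_ifs
        · exact ⟨le_rfl, hst⟩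
        · exact ⟨hst, le_rfl⟩
        · exact hw1 i
      have hvG : ∀ i, i ≤ N → G (v i) = r i := by
        intro i hi
        by_cases h0 : i = 0
        · subst h0; simp only [hvdef, if_pos rfl, hrdef]; simp
        · by_cases hNi : N ≤ i
          · have hiN : i = N := le_antisymm hi hNi
            subst hiN
            simp only [hvdef, if_neg h0, if_pos hNi]
            simp only [hrdef]; linarith [hNd]
          · simp only [hvdef, if_neg h0, if_neg hNi]
            rw [hw2 i, min_eq_left hi]
      have hvmono : ∀ i, i < N → v i ≤ v (i+1) := by
        intro i hi
        by_contra hcon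
        push_neg at hcon
        have h1 : G (v (i+1)) ≤ G (v i) :=
          hGmono (hIcc0 (hvmem (i+1))) (hIcc0 (hvmem i)) hcon.le
        rw [hvG i hi.le, hvG (i+1) hi] at h1
        rw [hrstep i] at h1
        linarith
      have hstep : ∀ i, i < N → (∫ u in v i..v (i+1), g u) = d := by
        intro i hi
        have h1 := hGsub (hIcc0 (hvmem i)) (hIcc0 (hvmem (i+1))) (hvmono i hi)
        rw [hvG i hi.le, hvG (i+1) hi, hrstep i] at h1
        linarith
      have hptbound : ∀ i, i < N → ∀ x ∈ Set.Icc (v i) (v (i+1)),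
          Real.exp (-(r (i+1))) ≤ Real.exp (-(G x)) ∧ Real.exp (-(G x)) ≤ Real.exp (-(r i)) := by
        intro i hi x hx
        have hxm : x ∈ Set.Icc (0:ℝ) t :=
          ⟨hs0.trans ((hvmem i).1.trans hx.1), hx.2.trans (hvmem (i+1)).2⟩
        have h1 : G (v i) ≤ G x := hGmono (hIcc0 (hvmem i)) hxm hx.1
        have h2 : G x ≤ G (v (i+1)) := hGmono hxm (hIcc0 (hvmem (i+1))) hx.2
        rw [hvG i hi.le] at h1
        rw [hvG (i+1) hi] at h2
        exact ⟨Real.exp_le_exp.mpr (by linarith), Real.exp_le_exp.mpr (by linarith)⟩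
      have hub : ∀ i, i < N →
          (∫ u in v i..v (i+1), g u * Real.exp (-(G u))) ≤ Real.exp (-(r i)) * d := by
        intro i hi
        have h1 : (∫ u in v i..v (i+1), g u * Real.exp (-(G u)))
            ≤ ∫ u in v i..v (i+1), g u * Real.exp (-(r i)) := by
          refine intervalIntegral.integral_mono_on (hvmono i hi)
            (hgE (hIcc0 (hvmem i)) (hIcc0 (hvmem (i+1))))
            ((hsub (hIcc0 (hvmem i)) (hIcc0 (hvmem (i+1)))).mul_const _) ?_
          intro x hx
          have hxm : x ∈ Set.Icc (0:ℝ) t :=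
            ⟨hs0.trans ((hvmem i).1.trans hx.1), hx.2.trans (hvmem (i+1)).2⟩
          exact mul_le_mul_of_nonneg_left (hptbound i hi x hx).2 (hg0 x hxm)
        rw [intervalIntegral.integral_mul_const, hstep i hi] at h1
        linarith [h1]
      have hlb : ∀ i, i < N →
          Real.exp (-(r (i+1))) * d ≤ ∫ u in v i..v (i+1), g u * Real.exp (-(G u)) := by
        intro i hi
        have h1 : (∫ u in v i..v (i+1), g u * Real.exp (-(r (i+1))))
            ≤ ∫ u in v i..v (i+1), g u * Real.exp (-(G u)) := by
          refine intervalIntegral.integral_mono_on (hvmono i hi)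
            ((hsub (hIcc0 (hvmem i)) (hIcc0 (hvmem (i+1)))).mul_const _)
            (hgE (hIcc0 (hvmem i)) (hIcc0 (hvmem (i+1)))) ?_
          intro x hx
          have hxm : x ∈ Set.Icc (0:ℝ) t :=
            ⟨hs0.trans ((hvmem i).1.trans hx.1), hx.2.trans (hvmem (i+1)).2⟩
          exact mul_le_mul_of_nonneg_left (hptbound i hi x hx).1 (hg0 x hxm)
        rw [intervalIntegral.integral_mul_const, hstep i hi] at h1
        linarith [h1]
      have htel : ∀ i : ℕ,
          Real.exp (-(r (i+1))) * d ≤ Real.exp (-(r i)) - Real.exp (-(r (i+1))) ∧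
          Real.exp (-(r i)) - Real.exp (-(r (i+1))) ≤ Real.exp (-(r i)) * d := by
        intro i
        have h1 : r (i+1) = r i + d := hrstep i
        have h2 : Real.exp (-(r (i+1))) = Real.exp (-(r i)) * Real.exp (-d) := by
          rw [h1, ← Real.exp_add]; ring_nf
        have h3 : Real.exp (-(r i)) = Real.exp (-(r (i+1))) * Real.exp d := by
          rw [h1, ← Real.exp_add]; ring_nf
        constructor
        · have h4 := Real.add_one_le_exp d
          nlinarith [Real.exp_pos (-(r (i+1)))]
        · have h4 := Real.add_one_le_exp (-d)
          nlinarith [Real.exp_pos (-(r i))]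
      have habs : ∀ i ∈ Finset.range N,
          |(∫ u in v i..v (i+1), g u * Real.exp (-(G u))) -
            (Real.exp (-(r i)) - Real.exp (-(r (i+1))))|
            ≤ (Real.exp (-(r i)) - Real.exp (-(r (i+1)))) * d := by
        intro i hi
        rw [Finset.mem_range] at hi
        have h1 := hub i hi
        have h2 := hlb i hi
        have h3 := htel i
        rw [abs_le]
        constructor <;> nlinarith [h3.1, h3.2]
      have hsum1 : (∑ i ∈ Finset.range N, ∫ u in v i..v (i+1), g u * Real.exp (-(G u)))
          = ∫ u in s..t, g u * Real.exp (-(G u)) := by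
        have h := intervalIntegral.sum_integral_adjacent_intervals (μ := volume) (a := v)
          (n := N) (f := fun u => g u * Real.exp (-(G u)))
          (fun k hk => hgE (hIcc0 (hvmem k)) (hIcc0 (hvmem (k+1))))
        have hv0 : v 0 = s := by simp [hvdef]
        have hvN : v N = t := by
          simp only [hvdef, if_neg (Nat.pos_iff_ne_zero.mp hN), if_pos le_rfl]
        rw [hv0, hvN] at h
        exact h
      have hsum2 : (∑ i ∈ Finset.range N,
          (Real.exp (-(r i)) - Real.exp (-(r (i+1)))))
          = Real.exp (-(G s)) - Real.exp (-(G t)) := by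
        rw [Finset.sum_range_sub' (f := fun i => Real.exp (-(r i)))]
        have h0 : r 0 = G s := by simp [hrdef]
        have hNr : r N = G t := by simp only [hrdef]; linarith [hNd]
        rw [h0, hNr]
      calc |(∫ u in s..t, g u * Real.exp (-(G u))) -
          (Real.exp (-(G s)) - Real.exp (-(G t)))|
          = |∑ i ∈ Finset.range N,
              ((∫ u in v i..v (i+1), g u * Real.exp (-(G u))) -
                (Real.exp (-(r i)) - Real.exp (-(r (i+1)))))| := by
            rw [Finset.sum_sub_distrib, hsum1, hsum2]
        _ ≤ ∑ i ∈ Finset.range N,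
              |(∫ u in v i..v (i+1), g u * Real.exp (-(G u))) -
                (Real.exp (-(r i)) - Real.exp (-(r (i+1))))| :=
            Finset.abs_sum_le_sum_abs _ _
        _ ≤ ∑ i ∈ Finset.range N,
              (Real.exp (-(r i)) - Real.exp (-(r (i+1)))) * d :=
            Finset.sum_le_sum habs
        _ = (Real.exp (-(G s)) - Real.exp (-(G t))) * d := by
            rw [← Finset.sum_mul, hsum2]
        _ ≤ 1 * d := by
            have h1 : Real.exp (-(G s)) ≤ 1 := by
              rw [Real.exp_le_one_iff]; linarith [hGnonneg hsmem]
            have h2 : 0 < Real.exp (-(G t)) := Real.exp_pos _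
            nlinarith
        _ = Δ / N := by rw [one_mul]
    -- conclude equality
    by_contra hne
    have hX : (∫ u in s..t, g u * Real.exp (-(G u))) -
        (Real.exp (-(G s)) - Real.exp (-(G t))) ≠ 0 := sub_ne_zero.mpr hne
    set ε := |(∫ u in s..t, g u * Real.exp (-(G u))) -
        (Real.exp (-(G s)) - Real.exp (-(G t)))| with hεdef
    have hε : 0 < ε := abs_pos.mpr hX
    obtain ⟨N, hNgt⟩ := exists_nat_gt (Δ / ε)
    have hN0 : 0 < N := by
      have h1 : 0 < Δ / ε := div_pos hΔ hε
      exact_mod_cast Nat.cast_pos.mp (h1.trans hNgt)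
    have h2 := key N hN0
    have hNR : (0:ℝ) < N := Nat.cast_pos.mpr hN0
    have h3 : Δ / N < ε := by
      rw [div_lt_iff₀ hNR]
      rw [div_lt_iff₀ hε] at hNgt
      linarith [hNgt]
    linarith

lemma partsAux (t : ℝ) (ht : 0 ≤ t) (f₁ f₂ : ℝ → ℝ)
    (h₁ : IntervalIntegrable f₁ volume 0 t) (h₂ : IntervalIntegrable f₂ volume 0 t) :
    (∫ s in (0:ℝ)..t, f₁ s * ∫ u in (0:ℝ)..s, f₂ u)
      = ∫ u in (0:ℝ)..t, f₂ u * ∫ s in u..t, f₁ s := by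
  set μ : Measure ℝ := volume.restrict (Set.Ioc (0:ℝ) t) with hμdef
  have hi₁ : Integrable f₁ μ := (intervalIntegrable_iff_integrableOn_Ioc_of_le ht).mp h₁
  have hi₂ : Integrable f₂ μ := (intervalIntegrable_iff_integrableOn_Ioc_of_le ht).mp h₂
  set F : ℝ × ℝ → ℝ :=
    Set.indicator {p : ℝ × ℝ | p.2 ≤ p.1} (fun p => f₁ p.1 * f₂ p.2) with hFdef
  have hmeas : MeasurableSet {p : ℝ × ℝ | p.2 ≤ p.1} :=
    measurableSet_le measurable_snd measurable_fst
  have hFint : Integrable F (μ.prod μ) := (hi₁.mul_prod hi₂).indicator hmeas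
  have hswap : (∫ s, (∫ u, F (s, u) ∂μ) ∂μ) = ∫ u, (∫ s, F (s, u) ∂μ) ∂μ := by
    apply MeasureTheory.integral_integral_swap (f := fun s u => F (s, u))
    exact hFint
  have lhs_eq : (∫ s, (∫ u, F (s, u) ∂μ) ∂μ)
      = ∫ s in (0:ℝ)..t, f₁ s * ∫ u in (0:ℝ)..s, f₂ u := by
    rw [intervalIntegral.integral_of_le ht, hμdef]
    refine setIntegral_congr_fun measurableSet_Ioc ?_
    intro s hs
    have heqon : EqOn (fun u => F (s, u))
        ((Set.Ioc (0:ℝ) s).indicator (fun u => f₁ s * f₂ u)) (Set.Ioc 0 t) := by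
      intro u hu
      simp only [hFdef, Set.indicator, Set.mem_setOf_eq, Set.mem_Ioc]
      by_cases hus : u ≤ s
      · rw [if_pos hus, if_pos ⟨hu.1, hus⟩]
      · rw [if_neg hus, if_neg (fun h => hus h.2)]
    calc (∫ u, F (s, u) ∂μ)
        = ∫ u in Set.Ioc (0:ℝ) t, (Set.Ioc (0:ℝ) s).indicator (fun u => f₁ s * f₂ u) u :=
          setIntegral_congr_fun measurableSet_Ioc heqon
      _ = ∫ u in Set.Ioc (0:ℝ) t ∩ Set.Ioc (0:ℝ) s, f₁ s * f₂ u :=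
          setIntegral_indicator measurableSet_Ioc
      _ = ∫ u in Set.Ioc (0:ℝ) s, f₁ s * f₂ u := by
          rw [Set.inter_eq_right.mpr (Set.Ioc_subset_Ioc le_rfl hs.2)]
      _ = f₁ s * ∫ u in Set.Ioc (0:ℝ) s, f₂ u := integral_const_mul _ _
      _ = f₁ s * ∫ u in (0:ℝ)..s, f₂ u := by
          rw [intervalIntegral.integral_of_le hs.1.le]
  have rhs_eq : (∫ u, (∫ s, F (s, u) ∂μ) ∂μ)
      = ∫ u in (0:ℝ)..t, f₂ u * ∫ s in u..t, f₁ s := by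
    rw [intervalIntegral.integral_of_le ht, hμdef]
    refine setIntegral_congr_fun measurableSet_Ioc ?_
    intro u hu
    have heqon : EqOn (fun s => F (s, u))
        ((Set.Icc u t).indicator (fun s => f₁ s * f₂ u)) (Set.Ioc 0 t) := by
      intro s hs
      simp only [hFdef, Set.indicator, Set.mem_setOf_eq, Set.mem_Icc]
      by_cases hus : u ≤ s
      · rw [if_pos hus, if_pos ⟨hus, hs.2⟩]
      · rw [if_neg hus, if_neg (fun h => hus h.1)]
    calc (∫ s, F (s, u) ∂μ)
        = ∫ s in Set.Ioc (0:ℝ) t, (Set.Icc u t).indicator (fun s => f₁ s * f₂ u) s :=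
          setIntegral_congr_fun measurableSet_Ioc heqon
      _ = ∫ s in Set.Ioc (0:ℝ) t ∩ Set.Icc u t, f₁ s * f₂ u :=
          setIntegral_indicator measurableSet_Icc
      _ = ∫ s in Set.Icc u t, f₁ s * f₂ u := by
          have hsub2 : Set.Icc u t ⊆ Set.Ioc (0:ℝ) t := fun x hx => ⟨hu.1.trans_le hx.1, hx.2⟩
          rw [Set.inter_eq_right.mpr hsub2]
      _ = ∫ s in Set.Ioc u t, f₁ s * f₂ u := integral_Icc_eq_integral_Ioc
      _ = (∫ s in Set.Ioc u t, f₁ s) * f₂ u := integral_mul_const _ _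
      _ = f₂ u * ∫ s in u..t, f₁ s := by
          rw [intervalIntegral.integral_of_le hu.2, mul_comm]
  rw [← lhs_eq, ← rhs_eq, hswap]

lemma masterAux (t : ℝ) (ht : 0 ≤ t) (g h w w' : ℝ → ℝ)
    (hg : IntervalIntegrable g volume 0 t)
    (hg0 : ∀ u ∈ Set.Icc (0:ℝ) t, 0 ≤ g u)
    (hw' : IntervalIntegrable w' volume 0 t)
    (hw : ∀ u ∈ Set.Icc (0:ℝ) t, w u = w 0 + ∫ v in (0:ℝ)..u, w' v)
    (hh : IntervalIntegrable h volume 0 t)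
    (hineq : ∀ᵐ u ∂(volume.restrict (Set.Icc (0:ℝ) t)), w' u ≤ g u * w u + h u) :
    Real.exp (-(∫ v in (0:ℝ)..t, g v)) * w t
      ≤ w 0 + ∫ u in (0:ℝ)..t, Real.exp (-(∫ v in (0:ℝ)..u, g v)) * h u := by
  set G : ℝ → ℝ := fun u => ∫ v in (0:ℝ)..u, g v with hGdef
  show Real.exp (-(G t)) * w t ≤ w 0 + ∫ u in (0:ℝ)..t, Real.exp (-(G u)) * h u
  set P : ℝ → ℝ := fun u => ∫ v in (0:ℝ)..u, w' v with hPdef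
  have hGcont : ContinuousOn G (Set.Icc 0 t) := by
    have h2 := intervalIntegral.continuousOn_primitive_interval
      (f := g) (μ := volume) (a := 0) (b := t)
      (by rw [Set.uIcc_of_le ht]; exact (intervalIntegrable_iff_integrableOn_Icc_of_le ht).mp hg)
    rwa [Set.uIcc_of_le ht] at h2
  have hPcont : ContinuousOn P (Set.Icc 0 t) := by
    have h2 := intervalIntegral.continuousOn_primitive_interval
      (f := w') (μ := volume) (a := 0) (b := t)
      (by rw [Set.uIcc_of_le ht]; exact (intervalIntegrable_iff_integrableOn_Icc_of_le ht).mp hw')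
    rwa [Set.uIcc_of_le ht] at h2
  have hEcont : ContinuousOn (fun u => Real.exp (-(G u))) (Set.Icc 0 t) :=
    Real.continuous_exp.comp_continuousOn hGcont.neg
  have hwcont : ContinuousOn w (Set.Icc 0 t) :=
    (continuousOn_const.add hPcont).congr hw
  have hEcont' : ContinuousOn (fun u => Real.exp (-(G u))) (Set.uIcc 0 t) := by
    rwa [Set.uIcc_of_le ht]
  have igE : IntervalIntegrable (fun u => g u * Real.exp (-(G u))) volume 0 t :=
    hg.mul_continuousOn hEcont'
  have iEw' : IntervalIntegrable (fun u => Real.exp (-(G u)) * w' u) volume 0 t :=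
    hw'.continuousOn_mul hEcont'
  have igw : IntervalIntegrable (fun u => g u * w u) volume 0 t :=
    hg.mul_continuousOn (by rwa [Set.uIcc_of_le ht])
  have iEgw : IntervalIntegrable (fun u => Real.exp (-(G u)) * (g u * w u)) volume 0 t :=
    igw.continuousOn_mul hEcont'
  have iEh : IntervalIntegrable (fun u => Real.exp (-(G u)) * h u) volume 0 t :=
    hh.continuousOn_mul hEcont'
  have iP : IntervalIntegrable (fun u => (g u * Real.exp (-(G u))) * P u) volume 0 t :=
    igE.mul_continuousOn (by rwa [Set.uIcc_of_le ht])
  have iw'E : IntervalIntegrable (fun u => w' u * Real.exp (-(G u))) volume 0 t :=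
    hw'.mul_continuousOn hEcont'
  have hwt : w t = w 0 + P t := hw t ⟨ht, le_rfl⟩
  -- the exponential identity for s = 0 and general u
  have e4 : (∫ u in (0:ℝ)..t, g u * Real.exp (-(G u))) = 1 - Real.exp (-(G t)) := by
    have h5 := lemA g hg hg0 (le_refl (0:ℝ)) ht
    simpa using h5
  have e6 : ∀ u ∈ Set.Icc (0:ℝ) t,
      (∫ s in u..t, g s * Real.exp (-(G s))) = Real.exp (-(G u)) - Real.exp (-(G t)) :=
    fun u hu => lemA g hg hg0 hu.1 hu.2
  -- key identity
  have hfun1 : (fun u => Real.exp (-(G u)) * (w' u - g u * w u))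
      = fun u => Real.exp (-(G u)) * w' u - Real.exp (-(G u)) * (g u * w u) := by
    funext u; ring
  have e2 : (∫ u in (0:ℝ)..t, Real.exp (-(G u)) * (g u * w u))
      = ∫ u in (0:ℝ)..t, (w 0 * (g u * Real.exp (-(G u))) + (g u * Real.exp (-(G u))) * P u) := by
    apply intervalIntegral.integral_congr
    rw [Set.uIcc_of_le ht]
    intro u hu
    simp only
    rw [hw u hu]
    ring
  have e3 : (∫ u in (0:ℝ)..t, (w 0 * (g u * Real.exp (-(G u))) + (g u * Real.exp (-(G u))) * P u))
      = w 0 * (1 - Real.exp (-(G t))) + ∫ u in (0:ℝ)..t, (g u * Real.exp (-(G u))) * P u := by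
    rw [intervalIntegral.integral_add (igE.const_mul _) iP, intervalIntegral.integral_const_mul, e4]
  have e5 : (∫ u in (0:ℝ)..t, (g u * Real.exp (-(G u))) * P u)
      = ∫ u in (0:ℝ)..t, w' u * ∫ s in u..t, g s * Real.exp (-(G s)) :=
    partsAux t ht (fun s => g s * Real.exp (-(G s))) w' igE hw'
  have e6' : (∫ u in (0:ℝ)..t, w' u * ∫ s in u..t, g s * Real.exp (-(G s)))
      = ∫ u in (0:ℝ)..t, (w' u * Real.exp (-(G u)) - w' u * Real.exp (-(G t))) := by
    apply intervalIntegral.integral_congr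
    rw [Set.uIcc_of_le ht]
    intro u hu
    simp only
    rw [e6 u hu]
    ring
  have e7 : (∫ u in (0:ℝ)..t, (w' u * Real.exp (-(G u)) - w' u * Real.exp (-(G t))))
      = (∫ u in (0:ℝ)..t, w' u * Real.exp (-(G u))) - Real.exp (-(G t)) * P t := by
    rw [intervalIntegral.integral_sub iw'E (hw'.mul_const _),
      intervalIntegral.integral_mul_const]
    ring
  have ecomm : (∫ u in (0:ℝ)..t, w' u * Real.exp (-(G u)))
      = ∫ u in (0:ℝ)..t, Real.exp (-(G u)) * w' u := by
    apply intervalIntegral.integral_congr; intro u _; simp only [mul_comm]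
  have hId : (∫ u in (0:ℝ)..t, Real.exp (-(G u)) * (w' u - g u * w u))
      = Real.exp (-(G t)) * w t - w 0 := by
    rw [hfun1, intervalIntegral.integral_sub iEw' iEgw, e2, e3, e5, e6', e7, ecomm, hwt]
    ring
  have hmono : (∫ u in (0:ℝ)..t, Real.exp (-(G u)) * (w' u - g u * w u))
      ≤ ∫ u in (0:ℝ)..t, Real.exp (-(G u)) * h u := by
    refine intervalIntegral.integral_mono_ae_restrict ht (by rw [hfun1]; exact iEw'.sub iEgw)
      iEh ?_
    filter_upwards [hineq] with u hu
    exact mul_le_mul_of_nonneg_left (by linarith) (Real.exp_nonneg _)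
  linarith

set_option maxHeartbeats 1000000 in
/-- Smallness Gronwall-type lemma with an extra zero-order coefficient
(Lemma "RRS2016-L10.3phi"): if the non-negative absolutely continuous
function `η` (encoded by the FTC representation with an integrable a.e.
derivative `η'`) satisfies `η' + b y ≤ (c y + φ) η + ψ` a.e. on `[0,T]`,
with `φ, ψ, y ≥ 0` integrable, `b, c > 0`, `η 0 = η₀ ≥ 0`, and, with
`Φ(s) := ∫₀ˢ φ`, `D := η₀ + ∫₀ᵀ e^{−Φ(τ)} ψ(τ) dτ < (b/c) e^{−1−Φ(T)}`,
then `sup_{[0,T]} η < b/c` and `∫₀ᵀ y < 1/c`. -/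
theorem gronwall_smallness_phi
    (T : ℝ) (hT : 0 < T)
    (η η' φ ψ y : ℝ → ℝ) (b c η₀ : ℝ)
    (hb : 0 < b) (hc : 0 < c) (hη₀ : 0 ≤ η₀)
    (hη_nonneg : ∀ t ∈ Set.Icc (0 : ℝ) T, 0 ≤ η t)
    (hη : ∀ t ∈ Set.Icc (0 : ℝ) T, η t = η 0 + ∫ s in (0 : ℝ)..t, η' s)
    (hη0 : η 0 = η₀)
    (hη'int : IntervalIntegrable η' volume 0 T)
    (hφint : IntervalIntegrable φ volume 0 T)
    (hψint : IntervalIntegrable ψ volume 0 T)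
    (hyint : IntervalIntegrable y volume 0 T)
    (hφ0 : ∀ t ∈ Set.Icc (0 : ℝ) T, 0 ≤ φ t)
    (hψ0 : ∀ t ∈ Set.Icc (0 : ℝ) T, 0 ≤ ψ t)
    (hy0 : ∀ t ∈ Set.Icc (0 : ℝ) T, 0 ≤ y t)
    (hineq : ∀ᵐ t ∂(volume.restrict (Set.Icc (0 : ℝ) T)),
      η' t + b * y t ≤ (c * y t + φ t) * η t + ψ t)
    (hD : η₀ + (∫ τ in (0 : ℝ)..T, Real.exp (-(∫ σ in (0 : ℝ)..τ, φ σ)) * ψ τ)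
        < b / c * Real.exp (-(1 + ∫ σ in (0 : ℝ)..T, φ σ))) :
    sSup (η '' Set.Icc (0 : ℝ) T) < b / c ∧
    (∫ τ in (0 : ℝ)..T, y τ) < 1 / c := by
  have hT0 : (0:ℝ) ≤ T := hT.le
  have hbc : 0 < b / c := div_pos hb hc
  -- subinterval integrability
  have hsub : ∀ (f : ℝ → ℝ), IntervalIntegrable f volume 0 T →
      ∀ {a a' : ℝ}, a ∈ Set.Icc (0:ℝ) T → a' ∈ Set.Icc (0:ℝ) T →
      IntervalIntegrable f volume a a' := by
    intro f hf a a' ha ha'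
    refine hf.mono_set ?_
    exact Set.uIcc_subset_uIcc (by rw [Set.uIcc_of_le hT0]; exact ha)
      (by rw [Set.uIcc_of_le hT0]; exact ha')
  have h0T : (0:ℝ) ∈ Set.Icc (0:ℝ) T := ⟨le_rfl, hT0⟩
  have hTT : T ∈ Set.Icc (0:ℝ) T := ⟨hT0, le_rfl⟩
  -- Φ and its properties
  set Φ : ℝ → ℝ := fun u => ∫ σ in (0:ℝ)..u, φ σ with hΦdef
  have hΦcont : ContinuousOn Φ (Set.Icc 0 T) := by
    have h2 := intervalIntegral.continuousOn_primitive_interval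
      (f := φ) (μ := volume) (a := 0) (b := T)
      (by rw [Set.uIcc_of_le hT0];
          exact (intervalIntegrable_iff_integrableOn_Icc_of_le hT0).mp hφint)
    rwa [Set.uIcc_of_le hT0] at h2
  have hΦnonneg : ∀ u ∈ Set.Icc (0:ℝ) T, 0 ≤ Φ u := by
    intro u hu
    exact intervalIntegral.integral_nonneg hu.1 (fun x hx => hφ0 x ⟨hx.1, hx.2.trans hu.2⟩)
  have hΦmono : ∀ u ∈ Set.Icc (0:ℝ) T, Φ u ≤ Φ T := by
    intro u hu
    have h1 : Φ T - Φ u = ∫ σ in u..T, φ σ :=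
      integral_interval_sub_left hφint (hsub φ hφint h0T hu)
    have h2 : 0 ≤ ∫ σ in u..T, φ σ :=
      intervalIntegral.integral_nonneg hu.2 (fun x hx => hφ0 x ⟨hu.1.trans hx.1, hx.2⟩)
    linarith
  have hEΦcont : ContinuousOn (fun u => Real.exp (-(Φ u))) (Set.Icc 0 T) :=
    Real.continuous_exp.comp_continuousOn hΦcont.neg
  -- continuity of η
  have hPcont : ContinuousOn (fun u => ∫ v in (0:ℝ)..u, η' v) (Set.Icc 0 T) := by
    have h2 := intervalIntegral.continuousOn_primitive_interval
      (f := η') (μ := volume) (a := 0) (b := T)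
      (by rw [Set.uIcc_of_le hT0];
          exact (intervalIntegrable_iff_integrableOn_Icc_of_le hT0).mp hη'int)
    rwa [Set.uIcc_of_le hT0] at h2
  have hηcont : ContinuousOn η (Set.Icc 0 T) :=
    (continuousOn_const.add hPcont).congr hη
  -- the quantity D
  have iEψ : IntervalIntegrable (fun τ => Real.exp (-(Φ τ)) * ψ τ) volume 0 T :=
    hψint.continuousOn_mul (by rwa [Set.uIcc_of_le hT0])
  have hIψ : 0 ≤ ∫ τ in (0:ℝ)..T, Real.exp (-(Φ τ)) * ψ τ :=
    intervalIntegral.integral_nonneg hT0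
      (fun x hx => mul_nonneg (Real.exp_nonneg _) (hψ0 x hx))
  have hD' : η₀ + (∫ τ in (0:ℝ)..T, Real.exp (-(Φ τ)) * ψ τ)
      < b / c * Real.exp (-(1 + Φ T)) := hD
  have hexp1 : Real.exp (-(1 + Φ T)) ≤ Real.exp (-1) := by
    apply Real.exp_le_exp.mpr
    have := hΦnonneg T hTT
    linarith
  have hexpm1 : Real.exp (-(1:ℝ)) < 1 := by
    rw [show (1:ℝ) = Real.exp 0 by rw [Real.exp_zero]]
    exact Real.exp_lt_exp.mpr (by norm_num)
  have hexpm1' : 0 < Real.exp (-(1:ℝ)) := Real.exp_pos _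
  have hη0lt : η 0 < b / c := by
    rw [hη0]
    nlinarith
  -- Part 1 : η < b/c on [0,T]
  have hlt : ∀ x ∈ Set.Icc (0:ℝ) T, η x < b / c := by
    by_contra hcon
    push_neg at hcon
    obtain ⟨x₀, hx₀, hx₀'⟩ := hcon
    set S : Set ℝ := Set.Icc (0:ℝ) T ∩ η ⁻¹' Set.Ici (b / c) with hSdef
    have hSne : S.Nonempty := ⟨x₀, hx₀, hx₀'⟩
    have hSclosed : IsClosed S :=
      hηcont.preimage_isClosed_of_isClosed isClosed_Icc isClosed_Ici
    have hSbdd : BddBelow S := ⟨0, fun x hx => hx.1.1⟩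
    set t₁ := sInf S with ht₁def
    have ht₁S : t₁ ∈ S := hSclosed.csInf_mem hSne hSbdd
    have ht₁mem : t₁ ∈ Set.Icc (0:ℝ) T := ht₁S.1
    have hηt₁ : b / c ≤ η t₁ := ht₁S.2
    -- a.e. inequality on [0, t₁]
    have hineq1 : ∀ᵐ u ∂(volume.restrict (Set.Icc (0:ℝ) t₁)),
        η' u ≤ φ u * η u + ψ u := by
      have base : ∀ᵐ u ∂(volume.restrict (Set.Icc (0:ℝ) t₁)),
          η' u + b * y u ≤ (c * y u + φ u) * η u + ψ u :=
        ae_restrict_of_ae_restrict_of_subset (Set.Icc_subset_Icc le_rfl ht₁mem.2) hineq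
      have hne : ∀ᵐ u ∂(volume.restrict (Set.Icc (0:ℝ) t₁)), u ≠ t₁ := by
        rw [ae_iff]
        have hset : {a : ℝ | ¬ a ≠ t₁} = {t₁} := by ext a; simp
        rw [hset, Measure.restrict_apply (measurableSet_singleton t₁)]
        exact measure_mono_null Set.inter_subset_left Real.volume_singleton
      have hmem := ae_restrict_mem (μ := volume) (s := Set.Icc (0:ℝ) t₁) measurableSet_Icc
      filter_upwards [base, hne, hmem] with u hu hut₁ humem
      have huT : u ∈ Set.Icc (0:ℝ) T := ⟨humem.1, humem.2.trans ht₁mem.2⟩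
      have hult : u < t₁ := lt_of_le_of_ne humem.2 hut₁
      have hnotS : u ∉ S := fun h => (not_lt.mpr (csInf_le hSbdd h)) hult
      have hηu : η u < b / c := by
        by_contra h
        push_neg at h
        exact hnotS ⟨huT, h⟩
      have hyu : 0 ≤ y u := hy0 u huT
      have h1 : c * η u < b := by
        have := (lt_div_iff₀ hc).mp hηu
        linarith
      have h2 : y u * (c * η u - b) ≤ 0 :=
        mul_nonpos_iff.mpr (Or.inl ⟨hyu, by linarith⟩)
      nlinarith [hu, h2]
    have hmaster1 := masterAux t₁ ht₁mem.1 φ ψ η η'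
      (hsub φ hφint h0T ht₁mem)
      (fun u hu => hφ0 u ⟨hu.1, hu.2.trans ht₁mem.2⟩)
      (hsub η' hη'int h0T ht₁mem)
      (fun u hu => hη u ⟨hu.1, hu.2.trans ht₁mem.2⟩)
      (hsub ψ hψint h0T ht₁mem)
      hineq1
    -- ∫₀^{t₁} e^{-Φ}ψ ≤ ∫₀^T e^{-Φ}ψ
    have hψsplit : (∫ u in (0:ℝ)..t₁, Real.exp (-(Φ u)) * ψ u)
        ≤ ∫ u in (0:ℝ)..T, Real.exp (-(Φ u)) * ψ u := by
      have hadd := integral_add_adjacent_intervals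
        (hsub _ iEψ h0T ht₁mem) (hsub _ iEψ ht₁mem hTT)
      have h2 : 0 ≤ ∫ u in t₁..T, Real.exp (-(Φ u)) * ψ u :=
        intervalIntegral.integral_nonneg ht₁mem.2
          (fun x hx => mul_nonneg (Real.exp_nonneg _) (hψ0 x ⟨ht₁mem.1.trans hx.1, hx.2⟩))
      linarith
    have hkey : Real.exp (-(Φ t₁)) * η t₁
        ≤ η₀ + ∫ u in (0:ℝ)..T, Real.exp (-(Φ u)) * ψ u := by
      rw [hη0] at hmaster1
      calc Real.exp (-(Φ t₁)) * η t₁ ≤ η₀ + ∫ u in (0:ℝ)..t₁, Real.exp (-(Φ u)) * ψ u :=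
            hmaster1
        _ ≤ _ := by linarith
    have hup : b / c * Real.exp (-(1 + Φ T)) ≤ b / c * (Real.exp (-1) * Real.exp (-(Φ t₁))) := by
      have h1 : Real.exp (-(1 + Φ T)) = Real.exp (-1) * Real.exp (-(Φ T)) := by
        rw [← Real.exp_add]; ring_nf
      have h2 : Real.exp (-(Φ T)) ≤ Real.exp (-(Φ t₁)) :=
        Real.exp_le_exp.mpr (by linarith [hΦmono t₁ ht₁mem])
      rw [h1]
      exact mul_le_mul_of_nonneg_left (mul_le_mul_of_nonneg_left h2 hexpm1'.le) hbc.le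
    have hfin : Real.exp (-(Φ t₁)) * η t₁
        < b / c * Real.exp (-1) * Real.exp (-(Φ t₁)) := by
      calc Real.exp (-(Φ t₁)) * η t₁ ≤ η₀ + ∫ u in (0:ℝ)..T, Real.exp (-(Φ u)) * ψ u := hkey
        _ < b / c * Real.exp (-(1 + Φ T)) := hD'
        _ ≤ b / c * (Real.exp (-1) * Real.exp (-(Φ t₁))) := hup
        _ = b / c * Real.exp (-1) * Real.exp (-(Φ t₁)) := by ring
    have hEpos : 0 < Real.exp (-(Φ t₁)) := Real.exp_pos _
    have hη₁lt : η t₁ < b / c * Real.exp (-1) := by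
      have := (mul_lt_mul_iff_left₀ hEpos).mp (by
        calc η t₁ * Real.exp (-(Φ t₁)) = Real.exp (-(Φ t₁)) * η t₁ := by ring
          _ < b / c * Real.exp (-1) * Real.exp (-(Φ t₁)) := hfin)
      exact this
    nlinarith
  constructor
  · -- sup part
    have himg : IsCompact (η '' Set.Icc (0:ℝ) T) := isCompact_Icc.image_of_continuousOn hηcont
    have hne' : (η '' Set.Icc (0:ℝ) T).Nonempty :=
      (Set.nonempty_Icc.mpr hT0).image η
    obtain ⟨x, hx, hxe⟩ := himg.sSup_mem hne'
    rw [← hxe]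
    exact hlt x hx
  · -- integral part
    set g2 : ℝ → ℝ := fun u => φ u + c * y u with hg2def
    have ig2 : IntervalIntegrable g2 volume 0 T := hφint.add (hyint.const_mul c)
    have hg20 : ∀ u ∈ Set.Icc (0:ℝ) T, 0 ≤ g2 u := by
      intro u hu
      have := hφ0 u hu
      have := hy0 u hu
      simp only [hg2def]
      nlinarith
    have hineq2 : ∀ᵐ u ∂(volume.restrict (Set.Icc (0:ℝ) T)),
        η' u ≤ g2 u * η u + (ψ u - b * y u) := by
      filter_upwards [hineq] with u hu
      simp only [hg2def]
      nlinarith [hu]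
    have hmaster2 := masterAux T hT0 g2 (fun u => ψ u - b * y u) η η'
      ig2 hg20 hη'int hη (hψint.sub (hyint.const_mul b)) hineq2
    set G2 : ℝ → ℝ := fun u => ∫ v in (0:ℝ)..u, g2 v with hG2def
    have hG2cont : ContinuousOn G2 (Set.Icc 0 T) := by
      have h2 := intervalIntegral.continuousOn_primitive_interval
        (f := g2) (μ := volume) (a := 0) (b := T)
        (by rw [Set.uIcc_of_le hT0];
            exact (intervalIntegrable_iff_integrableOn_Icc_of_le hT0).mp ig2)
      rwa [Set.uIcc_of_le hT0] at h2
    have hEG2cont : ContinuousOn (fun u => Real.exp (-(G2 u))) (Set.uIcc 0 T) := by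
      rw [Set.uIcc_of_le hT0]
      exact Real.continuous_exp.comp_continuousOn hG2cont.neg
    set Yc : ℝ → ℝ := fun u => ∫ v in (0:ℝ)..u, c * y v with hYcdef
    have hYccont : ContinuousOn Yc (Set.Icc 0 T) := by
      have h2 := intervalIntegral.continuousOn_primitive_interval
        (f := fun v => c * y v) (μ := volume) (a := 0) (b := T)
        (by rw [Set.uIcc_of_le hT0];
            exact (intervalIntegrable_iff_integrableOn_Icc_of_le hT0).mp (hyint.const_mul c))
      rwa [Set.uIcc_of_le hT0] at h2
    have hG2split : ∀ u ∈ Set.Icc (0:ℝ) T, G2 u = Φ u + Yc u := by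
      intro u hu
      simp only [hG2def, hΦdef, hYcdef, hg2def]
      exact intervalIntegral.integral_add (hsub φ hφint h0T hu)
        (hsub _ (hyint.const_mul c) h0T hu)
    have hYcnonneg : ∀ u ∈ Set.Icc (0:ℝ) T, 0 ≤ Yc u := by
      intro u hu
      exact intervalIntegral.integral_nonneg hu.1
        (fun x hx => mul_nonneg hc.le (hy0 x ⟨hx.1, hx.2.trans hu.2⟩))
    -- split the RHS integral of master2
    have iG2ψ : IntervalIntegrable (fun u => Real.exp (-(G2 u)) * ψ u) volume 0 T :=
      hψint.continuousOn_mul hEG2cont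
    have iG2y : IntervalIntegrable (fun u => Real.exp (-(G2 u)) * y u) volume 0 T :=
      hyint.continuousOn_mul hEG2cont
    have hsplit2 : (∫ u in (0:ℝ)..T, Real.exp (-(G2 u)) * (ψ u - b * y u))
        = (∫ u in (0:ℝ)..T, Real.exp (-(G2 u)) * ψ u)
          - b * ∫ u in (0:ℝ)..T, Real.exp (-(G2 u)) * y u := by
      have hfun : (fun u => Real.exp (-(G2 u)) * (ψ u - b * y u))
          = fun u => Real.exp (-(G2 u)) * ψ u - b * (Real.exp (-(G2 u)) * y u) := by
        funext u; ring
      rw [hfun, intervalIntegral.integral_sub iG2ψ (iG2y.const_mul b),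
        intervalIntegral.integral_const_mul]
    have hψcomp : (∫ u in (0:ℝ)..T, Real.exp (-(G2 u)) * ψ u)
        ≤ ∫ u in (0:ℝ)..T, Real.exp (-(Φ u)) * ψ u := by
      refine intervalIntegral.integral_mono_on hT0 iG2ψ iEψ ?_
      intro u hu
      have h1 : Φ u ≤ G2 u := by
        rw [hG2split u hu]
        linarith [hYcnonneg u hu]
      exact mul_le_mul_of_nonneg_right (Real.exp_le_exp.mpr (by linarith)) (hψ0 u hu)
    have hηT : 0 ≤ Real.exp (-(G2 T)) * η T :=
      mul_nonneg (Real.exp_nonneg _) (hη_nonneg T hTT)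
    have hb_bound : b * (∫ u in (0:ℝ)..T, Real.exp (-(G2 u)) * y u)
        ≤ η₀ + ∫ u in (0:ℝ)..T, Real.exp (-(Φ u)) * ψ u := by
      rw [hη0] at hmaster2
      have h1 : Real.exp (-(G2 T)) * η T
          ≤ η₀ + ((∫ u in (0:ℝ)..T, Real.exp (-(G2 u)) * ψ u)
            - b * ∫ u in (0:ℝ)..T, Real.exp (-(G2 u)) * y u) := by
        rw [← hsplit2]
        exact hmaster2
      linarith
    -- lower bound for the weighted integral of y
    have iYcy : IntervalIntegrable (fun u => Real.exp (-(Yc u)) * y u) volume 0 T :=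
      hyint.continuousOn_mul (by
        rw [Set.uIcc_of_le hT0]
        exact Real.continuous_exp.comp_continuousOn hYccont.neg)
    have hlow : Real.exp (-(Φ T)) * (∫ u in (0:ℝ)..T, Real.exp (-(Yc u)) * y u)
        ≤ ∫ u in (0:ℝ)..T, Real.exp (-(G2 u)) * y u := by
      rw [← intervalIntegral.integral_const_mul]
      refine intervalIntegral.integral_mono_on hT0 (iYcy.const_mul _) iG2y ?_
      intro u hu
      have h1 : Real.exp (-(G2 u)) = Real.exp (-(Φ u)) * Real.exp (-(Yc u)) := by
        rw [hG2split u hu, ← Real.exp_add]; ring_nf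
      have h2 : Real.exp (-(Φ T)) ≤ Real.exp (-(Φ u)) :=
        Real.exp_le_exp.mpr (by linarith [hΦmono u hu])
      have h3 : 0 ≤ y u := hy0 u hu
      calc Real.exp (-(Φ T)) * (Real.exp (-(Yc u)) * y u)
          ≤ Real.exp (-(Φ u)) * (Real.exp (-(Yc u)) * y u) := by
            apply mul_le_mul_of_nonneg_right h2
            positivity
        _ = Real.exp (-(G2 u)) * y u := by rw [h1]; ring
    -- exponential identity for Yc
    have hYcid : c * (∫ u in (0:ℝ)..T, Real.exp (-(Yc u)) * y u)
        = 1 - Real.exp (-(Yc T)) := by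
      have h1 := lemA (fun v => c * y v) (hyint.const_mul c)
        (fun u hu => mul_nonneg hc.le (hy0 u hu)) (le_refl (0:ℝ)) hT0
      have h2 : (∫ u in (0:ℝ)..T, (c * y u) * Real.exp (-(∫ v in (0:ℝ)..u, c * y v)))
          = c * ∫ u in (0:ℝ)..T, Real.exp (-(Yc u)) * y u := by
        rw [← intervalIntegral.integral_const_mul]
        apply intervalIntegral.integral_congr
        intro u _
        simp only [hYcdef]
        try ring
      rw [h2] at h1
      rw [h1]
      simp only [intervalIntegral.integral_same, neg_zero, Real.exp_zero, hYcdef]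
    -- combine everything
    have hfinal : b / c * (Real.exp (-(Φ T)) * (1 - Real.exp (-(Yc T))))
        < b / c * Real.exp (-(1 + Φ T)) := by
      have h2 : (1 - Real.exp (-(Yc T))) / c = ∫ u in (0:ℝ)..T, Real.exp (-(Yc u)) * y u := by
        rw [← hYcid, mul_comm, mul_div_assoc, div_self (ne_of_gt hc), mul_one]
      have h1 : b / c * (Real.exp (-(Φ T)) * (1 - Real.exp (-(Yc T))))
          = b * (Real.exp (-(Φ T)) * ((1 - Real.exp (-(Yc T))) / c)) := by
        ring
      calc b / c * (Real.exp (-(Φ T)) * (1 - Real.exp (-(Yc T))))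
          = b * (Real.exp (-(Φ T)) * ∫ u in (0:ℝ)..T, Real.exp (-(Yc u)) * y u) := by
            rw [h1, h2]
        _ ≤ b * ∫ u in (0:ℝ)..T, Real.exp (-(G2 u)) * y u := by
            apply mul_le_mul_of_nonneg_left hlow hb.le
        _ ≤ η₀ + ∫ u in (0:ℝ)..T, Real.exp (-(Φ u)) * ψ u := hb_bound
        _ < b / c * Real.exp (-(1 + Φ T)) := hD'
    have hexpsplit : Real.exp (-(1 + Φ T)) = Real.exp (-1) * Real.exp (-(Φ T)) := by
      rw [← Real.exp_add]; ring_nf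
    have hEX : 0 < Real.exp (-(Φ T)) := Real.exp_pos _
    have h1mX : 1 - Real.exp (-(Yc T)) < Real.exp (-1) := by
      rw [hexpsplit] at hfinal
      have h4 : Real.exp (-(Φ T)) * (1 - Real.exp (-(Yc T)))
          < Real.exp (-1) * Real.exp (-(Φ T)) := (mul_lt_mul_iff_right₀ hbc).mp hfinal
      have h5 : (1 - Real.exp (-(Yc T))) * Real.exp (-(Φ T))
          < Real.exp (-1) * Real.exp (-(Φ T)) := by
        calc (1 - Real.exp (-(Yc T))) * Real.exp (-(Φ T))
            = Real.exp (-(Φ T)) * (1 - Real.exp (-(Yc T))) := mul_comm _ _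
          _ < Real.exp (-1) * Real.exp (-(Φ T)) := h4
      exact (mul_lt_mul_iff_left₀ hEX).mp h5
    have h2e : (2:ℝ) ≤ Real.exp 1 := by
      have := Real.add_one_le_exp (1:ℝ)
      linarith
    have hinv : Real.exp (-(1:ℝ)) ≤ 1/2 := by
      have hmul : Real.exp (-(1:ℝ)) * Real.exp 1 = 1 := by
        rw [← Real.exp_add]; norm_num
      nlinarith
    have hXgt : Real.exp (-(1:ℝ)) < Real.exp (-(Yc T)) := by linarith
    have hYcT : Yc T < 1 := by
      have := Real.exp_lt_exp.mp hXgt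
      linarith
    have hYceq : Yc T = c * ∫ τ in (0:ℝ)..T, y τ := by
      simp only [hYcdef]
      exact intervalIntegral.integral_const_mul c y
    rw [hYceq] at hYcT
    rw [lt_div_iff₀ hc]
    linarith
end

section
/- Let n≥1, s,θ∈ℝ, and σ̃ > max{|s|, |s−θ+1|} + n/2. Then there exists a constant C = C(s,θ,σ̃,n) > 0 with the following property: for all sequences ĝ:ℤⁿ→ℂ and ŵ:ℤⁿ→ℂ such that (∑_{ξ∈ℤⁿ∖{0}} ϱ(ξ)^{2(σ̃+1)}|ĝ(ξ)|²)^{1/2} and (∑_{ξ∈ℤⁿ} ϱ(ξ)^{2s}|ŵ(ξ)|²)^{1/2} are finite, the commutator sequence K(ξ) := ∑_{η∈ℤⁿ} (ϱ(ξ)^θ − ϱ(ξ−η)^θ) ĝ(η) ŵ(ξ−η) (which are the Fourier coefficients of Λ_#^θ(gw) − g·Λ_#^θ w) satisfies ( ∑_{ξ∈ℤⁿ} ϱ(ξ)^{2(s−θ+1)}|K(ξ)|² )^{1/2} ≤ C · ( ∑_{ξ∈ℤⁿ∖{0}} ϱ(ξ)^{2(σ̃+1)}|ĝ(ξ)|²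 )^{1/2} · ( ∑_{ξ∈ℤⁿ} ϱ(ξ)^{2s}|ŵ(ξ)|² )^{1/2}. -/
open scoped BigOperators

/-- The weight `ϱ(ξ) = 2π(1+|ξ|²)^{1/2}` defining the periodic Sobolev norms. -/
noncomputable def varrho {n : ℕ} (ξ : Fin n → ℤ) : ℝ :=
  2 * Real.pi * Real.sqrt (1 + ∑ i, ((ξ i : ℝ)) ^ 2)

namespace BCE

variable {n : ℕ}

noncomputable def V (ξ : Fin n → ℤ) : EuclideanSpace ℝ (Fin n) := WithLp.toLp 2 (fun i => (ξ i : ℝ))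

lemma normV_sq (ξ : Fin n → ℤ) : ‖V ξ‖ ^ 2 = ∑ i, ((ξ i : ℝ)) ^ 2 := by
  rw [EuclideanSpace.norm_eq, Real.sq_sqrt (by positivity)]
  simp [V, Real.norm_eq_abs, sq_abs]

lemma varrho_eq (ξ : Fin n → ℤ) : varrho ξ = 2 * Real.pi * Real.sqrt (1 + ‖V ξ‖ ^ 2) := by
  rw [varrho, normV_sq]

lemma V_sub (ξ η : Fin n → ℤ) : V (ξ - η) = V ξ - V η := by
  ext i
  simp [V]

lemma one_le_sqrt_aux (x : ℝ) (hx : 0 ≤ x) : 1 ≤ Real.sqrt (1 + x) := by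
  have h := Real.sqrt_le_sqrt (show (1:ℝ) ≤ 1 + x by linarith)
  rwa [Real.sqrt_one] at h

lemma norm_le_sqrt_aux (x : ℝ) (hx : 0 ≤ x) : x ≤ Real.sqrt (1 + x ^ 2) :=
  calc x = Real.sqrt (x ^ 2) := (Real.sqrt_sq hx).symm
    _ ≤ Real.sqrt (1 + x ^ 2) := Real.sqrt_le_sqrt (by linarith)

lemma one_le_varrho (ξ : Fin n → ℤ) : 1 ≤ varrho ξ := by
  have h1 : 1 ≤ Real.sqrt (1 + ‖V ξ‖ ^ 2) := one_le_sqrt_aux _ (by positivity)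
  have h2 := Real.pi_gt_three
  rw [varrho_eq]
  nlinarith

lemma varrho_pos (ξ : Fin n → ℤ) : 0 < varrho ξ := lt_of_lt_of_le one_pos (one_le_varrho ξ)

lemma varrho_neg (ξ : Fin n → ℤ) : varrho (-ξ) = varrho ξ := by
  have h : ∑ i, (((-ξ) i : ℝ)) ^ 2 = ∑ i, ((ξ i : ℝ)) ^ 2 := by
    apply Finset.sum_congr rfl
    intro i _
    simp
  simp only [varrho, h]

lemma sqrt_lip_half {a b : ℝ} (ha : 0 ≤ a) (hb : 0 ≤ b) :
    Real.sqrt (1 + a ^ 2) - Real.sqrt (1 + b ^ 2) ≤ |a - b| := by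
  have hu := Real.sq_sqrt (show (0:ℝ) ≤ 1 + a ^ 2 by positivity)
  have hv := Real.sq_sqrt (show (0:ℝ) ≤ 1 + b ^ 2 by positivity)
  have hua : a ≤ Real.sqrt (1 + a ^ 2) := norm_le_sqrt_aux a ha
  have hvb : b ≤ Real.sqrt (1 + b ^ 2) := norm_le_sqrt_aux b hb
  have hu1 : 1 ≤ Real.sqrt (1 + a ^ 2) := one_le_sqrt_aux _ (by positivity)
  have hv1 : 1 ≤ Real.sqrt (1 + b ^ 2) := one_le_sqrt_aux _ (by positivity)
  set u := Real.sqrt (1 + a ^ 2)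
  set v := Real.sqrt (1 + b ^ 2)
  have huv : 0 < u + v := by linarith
  have key : u ^ 2 - v ^ 2 ≤ |a - b| * (u + v) := by
    have k1 : (a - b) * (a + b) ≤ |a - b| * (a + b) :=
      mul_le_mul_of_nonneg_right (le_abs_self _) (by linarith)
    have k2 : |a - b| * (a + b) ≤ |a - b| * (u + v) :=
      mul_le_mul_of_nonneg_left (by linarith) (abs_nonneg _)
    nlinarith
  nlinarith

lemma sqrt_one_add_sq_lip {a b : ℝ} (ha : 0 ≤ a) (hb : 0 ≤ b) :
    |Real.sqrt (1 + a ^ 2) - Real.sqrt (1 + b ^ 2)| ≤ |a - b| := by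
  rw [abs_le]
  constructor
  · have h := sqrt_lip_half hb ha
    rw [abs_sub_comm] at h
    linarith
  · exact sqrt_lip_half ha hb

lemma varrho_lip (ξ ζ : Fin n → ℤ) : |varrho ξ - varrho ζ| ≤ varrho (ξ - ζ) := by
  have h1 : |Real.sqrt (1 + ‖V ξ‖ ^ 2) - Real.sqrt (1 + ‖V ζ‖ ^ 2)| ≤ |‖V ξ‖ - ‖V ζ‖| :=
    sqrt_one_add_sq_lip (norm_nonneg _) (norm_nonneg _)
  have h2 : |‖V ξ‖ - ‖V ζ‖| ≤ ‖V ξ - V ζ‖ := abs_norm_sub_norm_le _ _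
  have h3 : ‖V (ξ - ζ)‖ ≤ Real.sqrt (1 + ‖V (ξ - ζ)‖ ^ 2) :=
    norm_le_sqrt_aux _ (norm_nonneg _)
  have hpi := Real.pi_gt_three
  rw [varrho_eq, varrho_eq, varrho_eq, ← mul_sub, abs_mul, abs_of_pos (by positivity : (0:ℝ) < 2 * Real.pi)]
  rw [← V_sub] at h2
  calc 2 * Real.pi * |Real.sqrt (1 + ‖V ξ‖ ^ 2) - Real.sqrt (1 + ‖V ζ‖ ^ 2)|
      ≤ 2 * Real.pi * ‖V (ξ - ζ)‖ := by
        apply mul_le_mul_of_nonneg_left (le_trans h1 h2) (by positivity)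
    _ ≤ 2 * Real.pi * Real.sqrt (1 + ‖V (ξ - ζ)‖ ^ 2) :=
        mul_le_mul_of_nonneg_left h3 (by positivity)

lemma peetre (ξ η : Fin n → ℤ) : varrho ξ ≤ varrho η * varrho (ξ - η) := by
  have hadd : V ξ = V η + V (ξ - η) := by rw [V_sub]; abel
  have h : ‖V ξ‖ ≤ ‖V η‖ + ‖V (ξ - η)‖ := by rw [hadd]; exact norm_add_le _ _
  rw [varrho_eq, varrho_eq, varrho_eq]
  set x := ‖V ξ‖ with hxd
  set p := ‖V η‖ with hpd
  set q := ‖V (ξ - η)‖ with hqd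
  have hx0 : 0 ≤ x := norm_nonneg _
  have hp0 : 0 ≤ p := norm_nonneg _
  have hq0 : 0 ≤ q := norm_nonneg _
  have e1 := Real.sq_sqrt (show (0:ℝ) ≤ 1 + p ^ 2 by positivity)
  have e2 := Real.sq_sqrt (show (0:ℝ) ≤ 1 + q ^ 2 by positivity)
  set u := Real.sqrt (1 + p ^ 2)
  set v := Real.sqrt (1 + q ^ 2)
  have hs1 : 1 ≤ u := one_le_sqrt_aux _ (by positivity)
  have hs2 : 1 ≤ v := one_le_sqrt_aux _ (by positivity)
  have hx2 : x ^ 2 ≤ (p + q) ^ 2 := by nlinarith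
  have e3 : (2 * u * v) ^ 2 = 4 * (1 + p ^ 2) * (1 + q ^ 2) := by
    rw [mul_pow, mul_pow, e1, e2]; ring
  have hsq : 1 + x ^ 2 ≤ (2 * u * v) ^ 2 := by nlinarith [sq_nonneg (p - q), mul_nonneg hp0 hq0, sq_nonneg (p*q)]
  have h1 : Real.sqrt (1 + x ^ 2) ≤ 2 * u * v :=
    calc Real.sqrt (1 + x ^ 2) ≤ Real.sqrt ((2 * u * v) ^ 2) := Real.sqrt_le_sqrt hsq
      _ = 2 * u * v := Real.sqrt_sq (by positivity)
  have hpi := Real.pi_gt_three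
  have hs0 : 0 ≤ Real.sqrt (1 + x ^ 2) := Real.sqrt_nonneg _
  have huv : (0:ℝ) ≤ u * v := mul_nonneg (by linarith) (by linarith)
  calc 2 * Real.pi * Real.sqrt (1 + x ^ 2) ≤ 2 * Real.pi * (2 * u * v) := by
        apply mul_le_mul_of_nonneg_left h1 (by positivity)
    _ ≤ (2 * Real.pi * u) * (2 * Real.pi * v) := by nlinarith [mul_nonneg huv (by linarith : (0:ℝ) ≤ Real.pi - 1)]

lemma peetre_rpow (t : ℝ) (ξ η : Fin n → ℤ) :
    varrho ξ ^ t ≤ varrho η ^ |t| * varrho (ξ - η) ^ t := by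
  rcases le_or_gt 0 t with ht | ht
  · rw [abs_of_nonneg ht, ← Real.mul_rpow (varrho_pos η).le (varrho_pos _).le]
    exact Real.rpow_le_rpow (varrho_pos ξ).le (peetre ξ η) ht
  · have hne : varrho (ξ - η) ≤ varrho η * varrho ξ := by
      have h := peetre (ξ - η) (-η)
      rw [sub_neg_eq_add, sub_add_cancel, varrho_neg] at h
      exact h
    have h2 : (varrho η * varrho ξ) ^ t ≤ varrho (ξ - η) ^ t :=
      Real.rpow_le_rpow_of_nonpos (varrho_pos _) hne ht.le
    rw [Real.mul_rpow (varrho_pos η).le (varrho_pos ξ).le] at h2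
    rw [abs_of_neg ht]
    have key : varrho ξ ^ t = varrho η ^ (-t) * (varrho η ^ t * varrho ξ ^ t) := by
      rw [← mul_assoc, ← Real.rpow_add (varrho_pos η), neg_add_cancel, Real.rpow_zero, one_mul]
    rw [key]
    exact mul_le_mul_of_nonneg_left h2 (Real.rpow_nonneg (varrho_pos η).le _)

end BCE
section part2
namespace BCE
variable {n : ℕ}

lemma rpow_mvt_aux (θ : ℝ) {a b : ℝ} (hb : 1 ≤ b) (hba : b ≤ a) :
    |a ^ θ - b ^ θ| ≤ |θ| * (a - b) * (a ^ (θ - 1) + b ^ (θ - 1)) := by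
  rcases eq_or_lt_of_le hba with rfl | hlt
  · simp
  · have hb0 : (0:ℝ) < b := lt_of_lt_of_le one_pos hb
    have hcont : ContinuousOn (fun x : ℝ => x ^ θ) (Set.Icc b a) := by
      intro x hx
      exact (Real.continuousAt_rpow_const x θ (Or.inl (by linarith [hx.1] : x ≠ 0))).continuousWithinAt
    have hderiv : ∀ x ∈ Set.Ioo b a, HasDerivAt (fun x : ℝ => x ^ θ) (θ * x ^ (θ - 1)) x :=
      fun x hx => Real.hasDerivAt_rpow_const (Or.inl (by linarith [hx.1] : x ≠ 0))
    obtain ⟨c, hc, heq⟩ := exists_hasDerivAt_eq_slope (fun x : ℝ => x ^ θ)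
      (fun x => θ * x ^ (θ - 1)) hlt hcont hderiv
    have hc0 : (0:ℝ) < c := lt_of_le_of_lt (by linarith) hc.1
    have hne : a - b ≠ 0 := ne_of_gt (by linarith)
    have habs : a ^ θ - b ^ θ = θ * c ^ (θ - 1) * (a - b) := by
      rw [heq]
      field_simp
    rw [habs, abs_mul, abs_mul, abs_of_nonneg (Real.rpow_nonneg hc0.le _),
      abs_of_nonneg (by linarith : (0:ℝ) ≤ a - b)]
    rw [mul_assoc, mul_assoc]
    apply mul_le_mul_of_nonneg_left _ (abs_nonneg θ)
    rw [mul_comm (c ^ (θ - 1)) (a - b)]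
    apply mul_le_mul_of_nonneg_left _ (by linarith : (0:ℝ) ≤ a - b)
    rcases le_or_gt 0 (θ - 1) with h1 | h1
    · have : c ^ (θ - 1) ≤ a ^ (θ - 1) := Real.rpow_le_rpow hc0.le hc.2.le h1
      have hb' : (0:ℝ) ≤ b ^ (θ - 1) := Real.rpow_nonneg hb0.le _
      linarith
    · have : c ^ (θ - 1) ≤ b ^ (θ - 1) := Real.rpow_le_rpow_of_nonpos hb0 hc.1.le h1.le
      have ha' : (0:ℝ) ≤ a ^ (θ - 1) := Real.rpow_nonneg (by linarith) _
      linarith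

lemma abs_rpow_sub_rpow (θ : ℝ) {a b : ℝ} (ha : 1 ≤ a) (hb : 1 ≤ b) :
    |a ^ θ - b ^ θ| ≤ |θ| * |a - b| * (a ^ (θ - 1) + b ^ (θ - 1)) := by
  rcases le_total b a with h | h
  · rw [abs_of_nonneg (by linarith : (0:ℝ) ≤ a - b)]
    exact rpow_mvt_aux θ hb h
  · have h2 := rpow_mvt_aux θ ha h
    rw [abs_sub_comm (a ^ θ) (b ^ θ), abs_sub_comm a b,
      abs_of_nonneg (by linarith : (0:ℝ) ≤ b - a)]
    linarith [h2]

/-- Main pointwise estimate. -/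
lemma main_ptwise (s θ : ℝ) (ξ η : Fin n → ℤ) :
    varrho ξ ^ (s - θ + 1) * |varrho ξ ^ θ - varrho (ξ - η) ^ θ| ≤
      2 * |θ| * varrho η ^ (1 + max |s| |s - θ + 1|) * varrho (ξ - η) ^ s := by
  set r := s - θ + 1 with hr
  set M := max |s| |s - θ + 1| with hM
  set ζ := ξ - η with hζ
  have hξζ : ξ - ζ = η := by rw [hζ]; abel
  have h1 : |varrho ξ ^ θ - varrho ζ ^ θ| ≤
      |θ| * |varrho ξ - varrho ζ| * (varrho ξ ^ (θ - 1) + varrho ζ ^ (θ - 1)) :=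
    abs_rpow_sub_rpow θ (one_le_varrho ξ) (one_le_varrho ζ)
  have h2 : |varrho ξ - varrho ζ| ≤ varrho η := by
    have := varrho_lip ξ ζ
    rwa [hξζ] at this
  have h3 : |varrho ξ ^ θ - varrho ζ ^ θ| ≤
      |θ| * varrho η * (varrho ξ ^ (θ - 1) + varrho ζ ^ (θ - 1)) := by
    refine h1.trans ?_
    apply mul_le_mul_of_nonneg_right _
      (add_nonneg (Real.rpow_nonneg (varrho_pos ξ).le _) (Real.rpow_nonneg (varrho_pos ζ).le _))
    exact mul_le_mul_of_nonneg_left h2 (abs_nonneg θ)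
  have hposξ := varrho_pos ξ
  have hposζ := varrho_pos ζ
  have hposη := varrho_pos η
  -- multiply by varrho ξ ^ r
  have h4 : varrho ξ ^ r * |varrho ξ ^ θ - varrho ζ ^ θ| ≤
      |θ| * varrho η * (varrho ξ ^ r * varrho ξ ^ (θ - 1) + varrho ξ ^ r * varrho ζ ^ (θ - 1)) := by
    have := mul_le_mul_of_nonneg_left h3 (Real.rpow_nonneg hposξ.le r)
    calc varrho ξ ^ r * |varrho ξ ^ θ - varrho ζ ^ θ|
        ≤ varrho ξ ^ r * (|θ| * varrho η * (varrho ξ ^ (θ - 1) + varrho ζ ^ (θ - 1))) := this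
      _ = |θ| * varrho η * (varrho ξ ^ r * varrho ξ ^ (θ - 1) + varrho ξ ^ r * varrho ζ ^ (θ - 1)) := by
          ring
  refine h4.trans ?_
  have e1 : varrho ξ ^ r * varrho ξ ^ (θ - 1) = varrho ξ ^ s := by
    rw [← Real.rpow_add hposξ]
    congr 1
    rw [hr]; ring
  have e2 : varrho ξ ^ s ≤ varrho η ^ M * varrho ζ ^ s := by
    refine (peetre_rpow s ξ η).trans ?_
    apply mul_le_mul_of_nonneg_right _ (Real.rpow_nonneg hposζ.le s)
    exact Real.rpow_le_rpow_of_exponent_le (one_le_varrho η) (le_max_left _ _)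
  have e3 : varrho ξ ^ r * varrho ζ ^ (θ - 1) ≤ varrho η ^ M * varrho ζ ^ s := by
    have p1 : varrho ξ ^ r ≤ varrho η ^ M * varrho ζ ^ r := by
      refine (peetre_rpow r ξ η).trans ?_
      apply mul_le_mul_of_nonneg_right _ (Real.rpow_nonneg hposζ.le r)
      exact Real.rpow_le_rpow_of_exponent_le (one_le_varrho η) (le_max_right _ _)
    have p2 : varrho ξ ^ r * varrho ζ ^ (θ - 1) ≤ varrho η ^ M * varrho ζ ^ r * varrho ζ ^ (θ - 1) :=
      mul_le_mul_of_nonneg_right p1 (Real.rpow_nonneg hposζ.le _)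
    refine p2.trans_eq ?_
    rw [mul_assoc, ← Real.rpow_add hposζ]
    congr 2
    rw [hr]; ring
  have e4 : varrho η * varrho η ^ M = varrho η ^ (1 + M) := by
    rw [Real.rpow_add hposη, Real.rpow_one]
  calc |θ| * varrho η * (varrho ξ ^ r * varrho ξ ^ (θ - 1) + varrho ξ ^ r * varrho ζ ^ (θ - 1))
      ≤ |θ| * varrho η * (varrho η ^ M * varrho ζ ^ s + varrho η ^ M * varrho ζ ^ s) := by
        apply mul_le_mul_of_nonneg_left _ (mul_nonneg (abs_nonneg θ) hposη.le)
        rw [e1]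
        exact add_le_add e2 e3
    _ = 2 * |θ| * (varrho η * varrho η ^ M) * varrho ζ ^ s := by ring
    _ = 2 * |θ| * varrho η ^ (1 + M) * varrho ζ ^ s := by rw [e4]

/-- Cauchy–Schwarz for tsums of nonnegative reals. -/
lemma tsum_cs {ι : Type*} (f g : ι → ℝ) (hf0 : ∀ i, 0 ≤ f i) (hg0 : ∀ i, 0 ≤ g i)
    (hf : Summable fun i => f i ^ 2) (hg : Summable fun i => g i ^ 2) :
    ∑' i, f i * g i ≤ Real.sqrt (∑' i, f i ^ 2) * Real.sqrt (∑' i, g i ^ 2) := by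
  have hs : Summable fun i => f i * g i := by
    apply Summable.of_nonneg_of_le (fun i => mul_nonneg (hf0 i) (hg0 i))
      (fun i => ?_) ((hf.add hg).div_const 2)
    nlinarith [sq_nonneg (f i - g i)]
  refine Summable.tsum_le_of_sum_le hs fun F => ?_
  have h1 : (∑ i ∈ F, f i * g i) ≤ Real.sqrt (∑ i ∈ F, f i ^ 2) * Real.sqrt (∑ i ∈ F, g i ^ 2) := by
    rw [← Real.sqrt_mul (Finset.sum_nonneg fun i _ => sq_nonneg _)]
    rcases le_or_gt (∑ i ∈ F, f i * g i) 0 with h | h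
    · exact h.trans (Real.sqrt_nonneg _)
    · rw [Real.le_sqrt h.le (mul_nonneg (Finset.sum_nonneg fun i _ => sq_nonneg _)
        (Finset.sum_nonneg fun i _ => sq_nonneg _))]
      exact Finset.sum_mul_sq_le_sq_mul_sq F f g
  refine h1.trans (mul_le_mul ?_ ?_ (Real.sqrt_nonneg _) (Real.sqrt_nonneg _)) <;>
    exact Real.sqrt_le_sqrt (Summable.sum_le_tsum F (fun i _ => sq_nonneg _) (by assumption))

end BCE
end part2
section part3
namespace BCE
variable {n : ℕ}

lemma summable_int_aux {q : ℝ} (hq : 1 < 2 * q) :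
    Summable fun k : ℤ => (1 + (k : ℝ) ^ 2) ^ (-q) := by
  have hq0 : 0 < q := by linarith
  have h1 : Summable fun k : ℤ => |(k : ℝ)| ^ (-(2 * q)) := Real.summable_abs_int_rpow hq
  have h2 : Summable fun k : ℤ => (if k = (0:ℤ) then (1:ℝ) else 0) :=
    (hasSum_ite_eq (0:ℤ) (1:ℝ)).summable
  apply Summable.of_nonneg_of_le (fun k => Real.rpow_nonneg (by positivity) _) _ (h1.add h2)
  intro k
  rcases eq_or_ne k 0 with rfl | hk
  · simp
    exact Real.rpow_nonneg le_rfl _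
  · have hk1 : (1:ℝ) ≤ |(k:ℝ)| := by
      have : (1:ℤ) ≤ |k| := Int.one_le_abs hk
      calc (1:ℝ) ≤ (|k| : ℤ) := by exact_mod_cast this
        _ = |(k:ℝ)| := by push_cast; rfl
    have habs : (0:ℝ) < |(k:ℝ)| ^ 2 := by positivity
    have hle : |(k:ℝ)| ^ 2 ≤ 1 + (k:ℝ) ^ 2 := by
      rw [sq_abs]; linarith
    have key : (1 + (k:ℝ) ^ 2) ^ (-q) ≤ (|(k:ℝ)| ^ 2) ^ (-q) :=
      Real.rpow_le_rpow_of_nonpos habs hle (by linarith)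
    have e : (|(k:ℝ)| ^ 2) ^ (-q) = |(k:ℝ)| ^ (-(2 * q)) := by
      rw [← Real.rpow_natCast |(k:ℝ)| 2, ← Real.rpow_mul (abs_nonneg _)]
      norm_num
    rw [if_neg hk, add_zero]
    rw [e] at key
    exact key

lemma summable_pi_prod {g : ℤ → ℝ} (hg : Summable g) (h0 : ∀ k, 0 ≤ g k) :
    ∀ m : ℕ, Summable fun η : Fin m → ℤ => ∏ i, g (η i) := by
  intro m
  induction m with
  | zero =>
    have : Finite (Fin 0 → ℤ) := by
      have : IsEmpty (Fin 0) := inferInstance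
      infer_instance
    exact Summable.of_finite
  | succ m ih =>
    let e := Fin.consEquiv (fun _ : Fin (m + 1) => ℤ)
    have hsum : Summable fun p : ℤ × (Fin m → ℤ) => g p.1 * ∏ i, g (p.2 i) :=
      Summable.mul_of_nonneg (f := g) (g := fun y : Fin m → ℤ => ∏ i, g (y i))
        hg ih h0 fun x => Finset.prod_nonneg fun i _ => h0 _
    have hsum2 : Summable fun p : ℤ × (Fin m → ℤ) => ∏ i, g ((e p) i) := by
      refine hsum.congr fun p => ?_
      show g p.1 * ∏ i, g (p.2 i) = ∏ i, g ((Fin.cons p.1 p.2 : ∀ _ : Fin (m+1), ℤ) i)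
      rw [Fin.prod_univ_succ]
      simp
    exact (Equiv.summable_iff e).mp hsum2

lemma prod_one_add_le {m : ℕ} (x : Fin m → ℝ) (hx : ∀ i, 0 ≤ x i) :
    ∏ i, (1 + x i) ≤ (1 + ∑ i, x i) ^ (m : ℕ) := by
  have key : ∀ s : Finset (Fin m), ∏ i ∈ s, (1 + x i) ≤ (1 + ∑ i ∈ s, x i) ^ s.card := by
    intro s
    induction s using Finset.induction_on with
    | empty => simp
    | @insert j s hj ih =>
      rw [Finset.prod_insert hj, Finset.sum_insert hj, Finset.card_insert_of_notMem hj]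
      have hs0 : 0 ≤ ∑ i ∈ s, x i := Finset.sum_nonneg fun i _ => hx i
      have h1 : (1 + x j) * ∏ i ∈ s, (1 + x i) ≤ (1 + x j) * (1 + ∑ i ∈ s, x i) ^ s.card :=
        mul_le_mul_of_nonneg_left ih (by linarith [hx j])
      refine h1.trans ?_
      have h2 : (1 + ∑ i ∈ s, x i) ^ s.card ≤ (1 + (x j + ∑ i ∈ s, x i)) ^ s.card :=
        pow_le_pow_left₀ (by linarith) (by linarith [hx j]) _
      have h3 : (1 + x j) * (1 + ∑ i ∈ s, x i) ^ s.card
          ≤ (1 + (x j + ∑ i ∈ s, x i)) * (1 + (x j + ∑ i ∈ s, x i)) ^ s.card := by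
        apply mul_le_mul (by linarith [hx j]) h2 (by positivity) (by linarith [hx j])
      refine h3.trans_eq ?_
      rw [← pow_succ']
  have := key Finset.univ
  simpa using this
end BCE
end part3
section part4
namespace BCE
variable {n : ℕ}

lemma summable_varrho_rpow_neg (hn : 1 ≤ n) {p : ℝ} (hp : (n : ℝ) < p) :
    Summable fun η : Fin n → ℤ => varrho η ^ (-p) := by
  have hn0 : (0:ℝ) < n := by exact_mod_cast hn
  set q := p / (2 * n) with hqdef
  have hq : 1 < 2 * q := by
    rw [hqdef, show 2 * (p / (2 * n)) = p / n by field_simp, lt_div_iff₀ hn0]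
    linarith
  have hq0 : 0 < q := by linarith
  have hg : Summable fun k : ℤ => (1 + (k : ℝ) ^ 2) ^ (-q) := summable_int_aux hq
  have hg0 : ∀ k : ℤ, 0 ≤ (1 + (k : ℝ) ^ 2) ^ (-q) := fun k => Real.rpow_nonneg (by positivity) _
  have hbig := summable_pi_prod hg hg0 n
  apply Summable.of_nonneg_of_le (fun η => Real.rpow_nonneg (varrho_pos η).le _) _ hbig
  intro η
  set Q := ∑ i, ((η i : ℝ)) ^ 2 with hQdef
  have hQ0 : 0 ≤ Q := Finset.sum_nonneg fun i _ => sq_nonneg _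
  have h2pi : (1:ℝ) ≤ 2 * Real.pi := by nlinarith [Real.pi_gt_three]
  have step1 : varrho η ^ (-p) = (2 * Real.pi) ^ (-p) * (1 + Q) ^ (-(p/2)) := by
    rw [show varrho η = 2 * Real.pi * Real.sqrt (1 + Q) from rfl]
    rw [Real.mul_rpow (by positivity) (Real.sqrt_nonneg _)]
    congr 1
    rw [Real.sqrt_eq_rpow, ← Real.rpow_mul (by positivity : (0:ℝ) ≤ 1 + Q)]
    congr 1
    ring
  have step2 : (2 * Real.pi) ^ (-p) ≤ 1 :=
    Real.rpow_le_one_of_one_le_of_nonpos h2pi (by linarith : -p ≤ 0)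
  have hprod_pos : (0:ℝ) < ∏ i, (1 + ((η i : ℝ)) ^ 2) :=
    Finset.prod_pos fun i _ => by positivity
  have hprod : ∏ i, (1 + ((η i : ℝ)) ^ 2) ≤ (1 + Q) ^ ((n : ℕ)) :=
    prod_one_add_le _ (fun i => sq_nonneg _)
  have step3 : (1 + Q) ^ (-(p/2)) ≤ ∏ i, (1 + ((η i : ℝ)) ^ 2) ^ (-q) := by
    have h1 : (1 + Q) ^ (-(p/2)) = ((1 + Q) ^ ((n:ℝ))) ^ (-q) := by
      rw [← Real.rpow_mul (by positivity : (0:ℝ) ≤ 1 + Q)]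
      congr 1
      rw [hqdef]
      field_simp
    have h2 : ((1 + Q) ^ ((n:ℝ))) ^ (-q) ≤ (∏ i, (1 + ((η i : ℝ)) ^ 2)) ^ (-q) := by
      apply Real.rpow_le_rpow_of_nonpos hprod_pos _ (by linarith : -q ≤ 0)
      rw [← Real.rpow_natCast (1 + Q) n] at hprod
      exact hprod
    have h3 : (∏ i, (1 + ((η i : ℝ)) ^ 2)) ^ (-q) = ∏ i, (1 + ((η i : ℝ)) ^ 2) ^ (-q) :=
      (Real.finset_prod_rpow Finset.univ _ (fun i _ => by positivity) (-q)).symm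
    rw [h1]
    rw [h3] at h2
    exact h2
  calc varrho η ^ (-p) = (2 * Real.pi) ^ (-p) * (1 + Q) ^ (-(p/2)) := step1
    _ ≤ 1 * ((1 + Q) ^ (-(p/2))) :=
        mul_le_mul_of_nonneg_right step2 (Real.rpow_nonneg (by positivity) _)
    _ = (1 + Q) ^ (-(p/2)) := one_mul _
    _ ≤ ∏ i, (1 + ((η i : ℝ)) ^ 2) ^ (-q) := step3

end BCE
end part4
section part5
namespace BCE
variable {n : ℕ}

lemma rpow_sq {x : ℝ} (hx : 0 < x) (a : ℝ) : (x ^ a) ^ 2 = x ^ (2 * a) := by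
  rw [← Real.rpow_natCast (x ^ a) 2, ← Real.rpow_mul hx.le]
  norm_num
  rw [mul_comm]

lemma summable_mul_of_sq {ι : Type*} (f g : ι → ℝ) (hf0 : ∀ i, 0 ≤ f i) (hg0 : ∀ i, 0 ≤ g i)
    (hf : Summable fun i => f i ^ 2) (hg : Summable fun i => g i ^ 2) :
    Summable fun i => f i * g i := by
  apply Summable.of_nonneg_of_le (fun i => mul_nonneg (hf0 i) (hg0 i))
    (fun i => ?_) ((hf.add hg).div_const 2)
  nlinarith [sq_nonneg (f i - g i)]

end BCE
end part5

open scoped BigOperators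
open BCE

/-- Commutator estimate for the periodic Bessel-potential operator
(Theorem "Jcomm"), stated on the Fourier side: for
`σ̃ > max{|s|, |s−θ+1|} + n/2` there is a constant `C > 0` such that for all
`g ∈ H^{σ̃+1}_#` and `w ∈ H^s_#`, the commutator Fourier coefficients
`K(ξ) = ∑_η (ϱ(ξ)^θ − ϱ(ξ−η)^θ) ĝ(η) ŵ(ξ−η)` (those of
`Λ_#^θ(gw) − g Λ_#^θ w`) are well defined and satisfy
`‖K‖_{H^{s−θ+1}_#} ≤ C |g|_{H^{σ̃+1}_#} ‖w‖_{H^s_#}`. -/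
theorem bessel_commutator_estimate
    (n : ℕ) (hn : 1 ≤ n) (s θ σ' : ℝ)
    (hσ : max |s| |s - θ + 1| + (n : ℝ) / 2 < σ') :
    ∃ C : ℝ, 0 < C ∧
      ∀ g w : (Fin n → ℤ) → ℂ,
        (Summable fun ξ : {ξ : Fin n → ℤ // ξ ≠ 0} =>
          varrho ξ.1 ^ (2 * (σ' + 1)) * ‖g ξ.1‖ ^ 2) →
        (Summable fun ξ : Fin n → ℤ => varrho ξ ^ (2 * s) * ‖w ξ‖ ^ 2) →
        (∀ ξ : Fin n → ℤ, Summable fun η : Fin n → ℤ =>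
          (varrho ξ ^ θ - varrho (ξ - η) ^ θ) • (g η * w (ξ - η))) ∧
        Real.sqrt (∑' ξ : Fin n → ℤ, varrho ξ ^ (2 * (s - θ + 1)) *
            ‖∑' η : Fin n → ℤ,
              (varrho ξ ^ θ - varrho (ξ - η) ^ θ) • (g η * w (ξ - η))‖ ^ 2) ≤
          C * Real.sqrt (∑' ξ : {ξ : Fin n → ℤ // ξ ≠ 0},
              varrho ξ.1 ^ (2 * (σ' + 1)) * ‖g ξ.1‖ ^ 2) *
            Real.sqrt (∑' ξ : Fin n → ℤ, varrho ξ ^ (2 * s) * ‖w ξ‖ ^ 2) := by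
  classical
  set r := s - θ + 1 with hrdef
  set M := max |s| |r| with hMdef
  set τ := σ' - M with hτdef
  have hτ : (n : ℝ) / 2 < τ := by rw [hτdef]; linarith
  have hn0 : (0 : ℝ) < n := by exact_mod_cast hn
  have hW : Summable fun η : Fin n → ℤ => varrho η ^ (-(2 * τ)) :=
    summable_varrho_rpow_neg hn (by linarith)
  set c₀ := 2 * |θ| with hc₀def
  have hc₀ : 0 ≤ c₀ := by positivity
  -- the W' constant
  have hWsub : Summable fun η : {ξ : Fin n → ℤ // ξ ≠ 0} => (varrho η.1 ^ (-τ)) ^ 2 := by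
    have h1 : Summable ((fun η : Fin n → ℤ => varrho η ^ (-(2 * τ))) ∘
        ((↑) : {η : Fin n → ℤ | η ≠ 0} → (Fin n → ℤ))) := hW.subtype _
    refine (Summable.congr h1 ?_ : Summable fun η : {ξ : Fin n → ℤ // ξ ≠ 0} => _)
    intro η
    show varrho η.1 ^ (-(2 * τ)) = (varrho η.1 ^ (-τ)) ^ 2
    rw [rpow_sq (varrho_pos _)]
    congr 1
    ring
  set W := ∑' η : {ξ : Fin n → ℤ // ξ ≠ 0}, (varrho η.1 ^ (-τ)) ^ 2 with hWdef
  have hW0 : 0 ≤ W := tsum_nonneg fun η => sq_nonneg _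
  refine ⟨(c₀ + 1) * (Real.sqrt W + 1), by positivity, ?_⟩
  intro g w hg hw
  -- notation
  set A := Real.sqrt (∑' ξ : {ξ : Fin n → ℤ // ξ ≠ 0},
      varrho ξ.1 ^ (2 * (σ' + 1)) * ‖g ξ.1‖ ^ 2) with hAdef
  have hA0 : 0 ≤ A := Real.sqrt_nonneg _
  set B2 := ∑' ξ : Fin n → ℤ, varrho ξ ^ (2 * s) * ‖w ξ‖ ^ 2 with hB2def
  have hB20 : 0 ≤ B2 := tsum_nonneg fun ξ => mul_nonneg (Real.rpow_nonneg (varrho_pos _).le _) (sq_nonneg _)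
  -- the sequences a and b
  set a : (Fin n → ℤ) → ℝ := fun η => if η = 0 then 0 else varrho η ^ (1 + M) * ‖g η‖ with hadef
  have ha0 : ∀ η, 0 ≤ a η := by
    intro η
    rw [hadef]
    dsimp only
    split
    · exact le_refl 0
    · exact mul_nonneg (Real.rpow_nonneg (varrho_pos _).le _) (norm_nonneg _)
  set b : (Fin n → ℤ) → ℝ := fun ζ => varrho ζ ^ s * ‖w ζ‖ with hbdef
  have hb0 : ∀ ζ, 0 ≤ b ζ := fun ζ =>
    mul_nonneg (Real.rpow_nonneg (varrho_pos _).le _) (norm_nonneg _)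
  have hb2 : Summable fun ζ => b ζ ^ 2 := by
    refine hw.congr fun ζ => ?_
    rw [hbdef]
    dsimp only
    rw [mul_pow, rpow_sq (varrho_pos _)]
  have hb2sum : ∑' ζ, b ζ ^ 2 = B2 := by
    refine tsum_congr fun ζ => ?_
    rw [hbdef]
    dsimp only
    rw [mul_pow, rpow_sq (varrho_pos _)]
  have hbB2 : ∀ ζ, b ζ ^ 2 ≤ B2 := by
    intro ζ
    rw [← hb2sum]
    exact Summable.le_tsum hb2 ζ fun j _ => sq_nonneg _
  have hbB : ∀ ζ, b ζ ≤ Real.sqrt B2 := by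
    intro ζ
    calc b ζ = Real.sqrt (b ζ ^ 2) := (Real.sqrt_sq (hb0 ζ)).symm
      _ ≤ Real.sqrt B2 := Real.sqrt_le_sqrt (hbB2 ζ)
  -- summability of a over the subtype, and on the full type
  have hgsub : Summable fun η : {ξ : Fin n → ℤ // ξ ≠ 0} =>
      (varrho η.1 ^ (σ' + 1) * ‖g η.1‖) ^ 2 := by
    refine hg.congr fun η => ?_
    rw [mul_pow, rpow_sq (varrho_pos _)]
  have hasub : Summable fun η : {ξ : Fin n → ℤ // ξ ≠ 0} => a η.1 := by
    have h := summable_mul_of_sq (fun η : {ξ : Fin n → ℤ // ξ ≠ 0} => varrho η.1 ^ (-τ))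
      (fun η => varrho η.1 ^ (σ' + 1) * ‖g η.1‖)
      (fun η => Real.rpow_nonneg (varrho_pos _).le _)
      (fun η => mul_nonneg (Real.rpow_nonneg (varrho_pos _).le _) (norm_nonneg _))
      hWsub hgsub
    refine h.congr fun η => ?_
    rw [hadef]
    dsimp only
    rw [if_neg η.2, ← mul_assoc, ← Real.rpow_add (varrho_pos _)]
    congr 2
    rw [hτdef]
    ring
  have hindic : Set.indicator {η : Fin n → ℤ | η ≠ 0} a = a := by
    funext x
    by_cases hx : x = 0
    · subst hx
      simp [Set.indicator, hadef]
    · simp [Set.indicator, hx, hadef]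
  have ha : Summable a := by
    have h2 : Summable (a ∘ ((↑) : {η : Fin n → ℤ | η ≠ 0} → (Fin n → ℤ))) := hasub
    have := summable_subtype_iff_indicator.mp h2
    rwa [hindic] at this
  set A₁ := ∑' η, a η with hA₁def
  have hA₁0 : 0 ≤ A₁ := tsum_nonneg ha0
  -- Step I : ℓ¹ bound on a
  have hA₁ : A₁ ≤ Real.sqrt W * A := by
    have h1 : A₁ = ∑' η : {ξ : Fin n → ℤ // ξ ≠ 0}, a η.1 := by
      have h0 := tsum_subtype {η : Fin n → ℤ | η ≠ 0} a
      rw [hindic] at h0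
      exact h0.symm
    have h2 : (∑' η : {ξ : Fin n → ℤ // ξ ≠ 0}, a η.1) =
        ∑' η : {ξ : Fin n → ℤ // ξ ≠ 0},
          (varrho η.1 ^ (-τ)) * (varrho η.1 ^ (σ' + 1) * ‖g η.1‖) := by
      refine tsum_congr fun η => ?_
      rw [hadef]
      dsimp only
      rw [if_neg η.2, ← mul_assoc, ← Real.rpow_add (varrho_pos _)]
      congr 2
      rw [hτdef]
      ring
    have h3 := tsum_cs (fun η : {ξ : Fin n → ℤ // ξ ≠ 0} => varrho η.1 ^ (-τ))
      (fun η => varrho η.1 ^ (σ' + 1) * ‖g η.1‖)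
      (fun η => Real.rpow_nonneg (varrho_pos _).le _)
      (fun η => mul_nonneg (Real.rpow_nonneg (varrho_pos _).le _) (norm_nonneg _))
      hWsub hgsub
    have h4 : (∑' η : {ξ : Fin n → ℤ // ξ ≠ 0}, (varrho η.1 ^ (σ' + 1) * ‖g η.1‖) ^ 2)
        = ∑' η : {ξ : Fin n → ℤ // ξ ≠ 0}, varrho η.1 ^ (2 * (σ' + 1)) * ‖g η.1‖ ^ 2 := by
      refine tsum_congr fun η => ?_
      rw [mul_pow, rpow_sq (varrho_pos _)]
    rw [h1, h2]
    rw [h4] at h3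
    exact h3
  -- pointwise term bound
  have hterm : ∀ ξ η : Fin n → ℤ,
      varrho ξ ^ r * ‖(varrho ξ ^ θ - varrho (ξ - η) ^ θ) • (g η * w (ξ - η))‖ ≤
        c₀ * (a η * b (ξ - η)) := by
    intro ξ η
    rcases eq_or_ne η 0 with rfl | hη
    · have : a 0 = 0 := by rw [hadef]; simp
      rw [this]
      simp [norm_smul]
    · have hm := main_ptwise s θ ξ η
      have e1 : ‖(varrho ξ ^ θ - varrho (ξ - η) ^ θ) • (g η * w (ξ - η))‖
          = |varrho ξ ^ θ - varrho (ξ - η) ^ θ| * (‖g η‖ * ‖w (ξ - η)‖) := by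
        rw [norm_smul, Real.norm_eq_abs, norm_mul]
      rw [e1]
      have e2 : a η = varrho η ^ (1 + M) * ‖g η‖ := by rw [hadef]; dsimp only; rw [if_neg hη]
      calc varrho ξ ^ r * (|varrho ξ ^ θ - varrho (ξ - η) ^ θ| * (‖g η‖ * ‖w (ξ - η)‖))
          = (varrho ξ ^ r * |varrho ξ ^ θ - varrho (ξ - η) ^ θ|) * (‖g η‖ * ‖w (ξ - η)‖) := by
            ring
        _ ≤ (2 * |θ| * varrho η ^ (1 + M) * varrho (ξ - η) ^ s) * (‖g η‖ * ‖w (ξ - η)‖) := by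
            apply mul_le_mul_of_nonneg_right hm
              (mul_nonneg (norm_nonneg _) (norm_nonneg _))
        _ = c₀ * (a η * b (ξ - η)) := by
            rw [e2, hbdef, hc₀def]
            dsimp only
            ring
  -- summability of the convolution-type series
  have hconv : ∀ ξ : Fin n → ℤ, Summable fun η => a η * b (ξ - η) := by
    intro ξ
    apply Summable.of_nonneg_of_le (fun η => mul_nonneg (ha0 η) (hb0 _))
      (fun η => mul_le_mul_of_nonneg_left (hbB (ξ - η)) (ha0 η)) (ha.mul_right (Real.sqrt B2))
  have hconv2 : ∀ ξ : Fin n → ℤ, Summable fun η => a η * b (ξ - η) ^ 2 := by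
    intro ξ
    apply Summable.of_nonneg_of_le (fun η => mul_nonneg (ha0 η) (sq_nonneg _))
      (fun η => mul_le_mul_of_nonneg_left (hbB2 (ξ - η)) (ha0 η)) (ha.mul_right B2)
  -- summability of the norms of the commutator terms
  have hnorm : ∀ ξ : Fin n → ℤ, Summable fun η : Fin n → ℤ =>
      ‖(varrho ξ ^ θ - varrho (ξ - η) ^ θ) • (g η * w (ξ - η))‖ := by
    intro ξ
    have hpos := Real.rpow_pos_of_pos (varrho_pos ξ) r
    apply Summable.of_nonneg_of_le (fun η => norm_nonneg _) (fun η => ?_)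
      (((hconv ξ).mul_left c₀).mul_left (varrho ξ ^ r)⁻¹)
    have h := hterm ξ η
    have h2 := mul_le_mul_of_nonneg_left h (inv_nonneg.mpr hpos.le)
    rw [← mul_assoc, inv_mul_cancel₀ (ne_of_gt hpos), one_mul] at h2
    rw [mul_assoc] at h2 ⊢
    exact h2
  have hsummand : ∀ ξ : Fin n → ℤ, Summable fun η : Fin n → ℤ =>
      (varrho ξ ^ θ - varrho (ξ - η) ^ θ) • (g η * w (ξ - η)) :=
    fun ξ => (hnorm ξ).of_norm
  refine ⟨hsummand, ?_⟩
  -- definitions of S and T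
  set S : (Fin n → ℤ) → ℝ := fun ξ => ∑' η, a η * b (ξ - η) with hSdef
  set T : (Fin n → ℤ) → ℝ := fun ξ => ∑' η, a η * b (ξ - η) ^ 2 with hTdef
  have hS0 : ∀ ξ, 0 ≤ S ξ := fun ξ => tsum_nonneg fun η => mul_nonneg (ha0 η) (hb0 _)
  have hT0 : ∀ ξ, 0 ≤ T ξ := fun ξ => tsum_nonneg fun η => mul_nonneg (ha0 η) (sq_nonneg _)
  -- per-ξ Cauchy–Schwarz
  have hScs : ∀ ξ, S ξ ≤ Real.sqrt A₁ * Real.sqrt (T ξ) := by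
    intro ξ
    have eq1 : ∀ η, Real.sqrt (a η) * (Real.sqrt (a η) * b (ξ - η)) = a η * b (ξ - η) :=
      fun η => by rw [← mul_assoc, Real.mul_self_sqrt (ha0 η)]
    have eq2 : ∀ η : Fin n → ℤ, Real.sqrt (a η) ^ 2 = a η := fun η => Real.sq_sqrt (ha0 η)
    have eq3 : ∀ η, (Real.sqrt (a η) * b (ξ - η)) ^ 2 = a η * b (ξ - η) ^ 2 :=
      fun η => by rw [mul_pow, Real.sq_sqrt (ha0 η)]
    have h := tsum_cs (fun η => Real.sqrt (a η)) (fun η => Real.sqrt (a η) * b (ξ - η))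
      (fun η => Real.sqrt_nonneg _)
      (fun η => mul_nonneg (Real.sqrt_nonneg _) (hb0 _))
      (ha.congr fun η => (eq2 η).symm)
      ((hconv2 ξ).congr fun η => (eq3 η).symm)
    have e1 : (∑' η, Real.sqrt (a η) * (Real.sqrt (a η) * b (ξ - η))) = S ξ :=
      tsum_congr eq1
    have e2 : (∑' η : Fin n → ℤ, Real.sqrt (a η) ^ 2) = A₁ := tsum_congr eq2
    have e3 : (∑' η, (Real.sqrt (a η) * b (ξ - η)) ^ 2) = T ξ := tsum_congr eq3
    rw [e1, e2, e3] at h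
    exact h
  -- bound on ϱ^r ‖K ξ‖
  have hKb : ∀ ξ : Fin n → ℤ,
      varrho ξ ^ r * ‖∑' η : Fin n → ℤ, (varrho ξ ^ θ - varrho (ξ - η) ^ θ) • (g η * w (ξ - η))‖
        ≤ c₀ * S ξ := by
    intro ξ
    have h1 : ‖∑' η : Fin n → ℤ, (varrho ξ ^ θ - varrho (ξ - η) ^ θ) • (g η * w (ξ - η))‖
        ≤ ∑' η, ‖(varrho ξ ^ θ - varrho (ξ - η) ^ θ) • (g η * w (ξ - η))‖ :=
      norm_tsum_le_tsum_norm (hnorm ξ)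
    have h2 := mul_le_mul_of_nonneg_left h1 (Real.rpow_nonneg (varrho_pos ξ).le r)
    refine h2.trans ?_
    rw [← tsum_mul_left]
    have h3 := Summable.tsum_le_tsum (fun η => hterm ξ η) ((hnorm ξ).mul_left (varrho ξ ^ r))
      ((hconv ξ).mul_left c₀)
    refine h3.trans_eq ?_
    rw [tsum_mul_left]
  -- finset bound for ∑ T
  have hTF : ∀ F : Finset (Fin n → ℤ), ∑ ξ ∈ F, T ξ ≤ A₁ * B2 := by
    intro F
    have hswap : ∑ ξ ∈ F, T ξ = ∑' η, ∑ ξ ∈ F, a η * b (ξ - η) ^ 2 := by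
      rw [hTdef]
      exact (Summable.tsum_finsetSum fun ξ _ => hconv2 ξ).symm
    rw [hswap]
    have hbound : ∀ η, (∑ ξ ∈ F, a η * b (ξ - η) ^ 2) ≤ a η * B2 := by
      intro η
      rw [← Finset.mul_sum]
      apply mul_le_mul_of_nonneg_left _ (ha0 η)
      have hinj : ∀ x ∈ F, ∀ y ∈ F, x - η = y - η → x = y := by
        intro x _ y _ hxy
        have := congrArg (· + η) hxy
        simpa using this
      have himage : ∑ ξ ∈ F, b (ξ - η) ^ 2 = ∑ ζ ∈ F.image (· - η), b ζ ^ 2 := by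
        rw [Finset.sum_image hinj]
      rw [himage, ← hb2sum]
      exact Summable.sum_le_tsum _ (fun i _ => sq_nonneg _) hb2
    have hmid : Summable fun η => ∑ ξ ∈ F, a η * b (ξ - η) ^ 2 := by
      apply Summable.of_nonneg_of_le
        (fun η => Finset.sum_nonneg fun ξ _ => mul_nonneg (ha0 η) (sq_nonneg _))
        hbound (ha.mul_right B2)
    calc (∑' η, ∑ ξ ∈ F, a η * b (ξ - η) ^ 2) ≤ ∑' η, a η * B2 :=
          Summable.tsum_le_tsum hbound hmid (ha.mul_right B2)
      _ = A₁ * B2 := by rw [tsum_mul_right]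
  -- assemble: finset bound for the main sum
  have hmain : ∀ F : Finset (Fin n → ℤ),
      (∑ ξ ∈ F, varrho ξ ^ (2 * r) *
        ‖∑' η : Fin n → ℤ, (varrho ξ ^ θ - varrho (ξ - η) ^ θ) • (g η * w (ξ - η))‖ ^ 2)
        ≤ (c₀ * A₁) ^ 2 * B2 := by
    intro F
    have hpt : ∀ ξ : Fin n → ℤ, varrho ξ ^ (2 * r) *
        ‖∑' η : Fin n → ℤ, (varrho ξ ^ θ - varrho (ξ - η) ^ θ) • (g η * w (ξ - η))‖ ^ 2
        ≤ c₀ ^ 2 * (A₁ * T ξ) := by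
      intro ξ
      have e : varrho ξ ^ (2 * r) *
          ‖∑' η : Fin n → ℤ, (varrho ξ ^ θ - varrho (ξ - η) ^ θ) • (g η * w (ξ - η))‖ ^ 2
          = (varrho ξ ^ r *
            ‖∑' η : Fin n → ℤ, (varrho ξ ^ θ - varrho (ξ - η) ^ θ) • (g η * w (ξ - η))‖) ^ 2 := by
        rw [mul_pow, rpow_sq (varrho_pos ξ)]
      rw [e]
      calc (varrho ξ ^ r *
            ‖∑' η : Fin n → ℤ, (varrho ξ ^ θ - varrho (ξ - η) ^ θ) • (g η * w (ξ - η))‖) ^ 2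
          ≤ (c₀ * S ξ) ^ 2 := by
            apply pow_le_pow_left₀
              (mul_nonneg (Real.rpow_nonneg (varrho_pos ξ).le r) (norm_nonneg _)) (hKb ξ)
        _ ≤ (c₀ * (Real.sqrt A₁ * Real.sqrt (T ξ))) ^ 2 := by
            apply pow_le_pow_left₀ (mul_nonneg hc₀ (hS0 ξ))
            exact mul_le_mul_of_nonneg_left (hScs ξ) hc₀
        _ = c₀ ^ 2 * (A₁ * T ξ) := by
            have esq : (Real.sqrt A₁ * Real.sqrt (T ξ)) ^ 2 = A₁ * T ξ := by
              rw [mul_pow, Real.sq_sqrt hA₁0, Real.sq_sqrt (hT0 ξ)]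
            rw [mul_pow, esq]
    calc (∑ ξ ∈ F, varrho ξ ^ (2 * r) *
          ‖∑' η : Fin n → ℤ, (varrho ξ ^ θ - varrho (ξ - η) ^ θ) • (g η * w (ξ - η))‖ ^ 2)
        ≤ ∑ ξ ∈ F, c₀ ^ 2 * (A₁ * T ξ) := Finset.sum_le_sum fun ξ _ => hpt ξ
      _ = c₀ ^ 2 * A₁ * ∑ ξ ∈ F, T ξ := by
          rw [Finset.mul_sum]
          exact Finset.sum_congr rfl fun ξ _ => by ring
      _ ≤ c₀ ^ 2 * A₁ * (A₁ * B2) := by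
          apply mul_le_mul_of_nonneg_left (hTF F) (by positivity)
      _ = (c₀ * A₁) ^ 2 * B2 := by ring
  have htsum : (∑' ξ : Fin n → ℤ, varrho ξ ^ (2 * r) *
      ‖∑' η : Fin n → ℤ, (varrho ξ ^ θ - varrho (ξ - η) ^ θ) • (g η * w (ξ - η))‖ ^ 2)
      ≤ (c₀ * A₁) ^ 2 * B2 :=
    tsum_le_of_sum_le' (by positivity) hmain
  -- final square-root chain
  calc Real.sqrt (∑' ξ : Fin n → ℤ, varrho ξ ^ (2 * r) *
        ‖∑' η : Fin n → ℤ, (varrho ξ ^ θ - varrho (ξ - η) ^ θ) • (g η * w (ξ - η))‖ ^ 2)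
      ≤ Real.sqrt ((c₀ * A₁) ^ 2 * B2) := Real.sqrt_le_sqrt htsum
    _ = (c₀ * A₁) * Real.sqrt B2 := by
        rw [Real.sqrt_mul (sq_nonneg _), Real.sqrt_sq (by positivity)]
    _ ≤ (c₀ * (Real.sqrt W * A)) * Real.sqrt B2 := by
        apply mul_le_mul_of_nonneg_right _ (Real.sqrt_nonneg _)
        exact mul_le_mul_of_nonneg_left hA₁ hc₀
    _ ≤ ((c₀ + 1) * (Real.sqrt W + 1)) * A * Real.sqrt B2 := by
        apply mul_le_mul_of_nonneg_right _ (Real.sqrt_nonneg _)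
        have h1 : c₀ * Real.sqrt W ≤ (c₀ + 1) * (Real.sqrt W + 1) := by
          nlinarith [Real.sqrt_nonneg W]
        nlinarith [Real.sqrt_nonneg W, hA0]
end

section
/- First Korn inequality in Fourier form: let n≥1 and let v̂:ℤⁿ→ℂⁿ be any sequence. Then ∑_{ξ∈ℤⁿ} ∑_{j,β=1}^{n} |2π ξ_j v̂_β(ξ)|² ≤ 2 ∑_{ξ∈ℤⁿ} ∑_{j,β=1}^{n} | π ( ξ_j v̂_β(ξ) + ξ_β v̂_j(ξ) ) |², i.e., the Fourier expression of ‖∇v‖²_{L²(𝕋ⁿ)} is at most twice the Fourier expression of ‖𝔼(v)‖²_{L²(𝕋ⁿ)}, where 𝔼(v) is the symmetrized gradient with entries E_{jβ}(v) = ½(∂_j v_β + ∂_β v_j). -/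
open scoped BigOperators


open Complex Finset

lemma norm1 (z : ℂ) : ‖2*(Real.pi:ℂ)*z‖^2 = 4*Real.pi^2*normSq z := by
  rw [show 2*(Real.pi:ℂ)*z = ((2*Real.pi:ℝ):ℂ)*z by push_cast; ring, norm_mul, mul_pow,
    Complex.norm_real, Complex.sq_norm, Real.norm_eq_abs,
    _root_.abs_of_nonneg (by positivity : (0:ℝ) ≤ 2*Real.pi)]
  ring

lemma norm2 (z : ℂ) : ‖(Real.pi:ℂ)*z‖^2 = Real.pi^2 * normSq z := by
  rw [norm_mul, mul_pow, Complex.sq_norm z, Complex.norm_real,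
    Real.norm_eq_abs, _root_.sq_abs]

lemma key (n : ℕ) (c w : Fin n → ℂ) (hc : ∀ j, (starRingEnd ℂ) (c j) = c j) :
    ∑ j : Fin n, ∑ β : Fin n, ‖2*(Real.pi:ℂ)*(c j*w β)‖^2
      + 4*Real.pi^2 * normSq (∑ j, c j * w j)
    = 2 * ∑ j : Fin n, ∑ β : Fin n, ‖(Real.pi:ℂ)*(c j*w β + c β*w j)‖^2 := by
  have h2 : ∀ j β : Fin n, ‖(Real.pi:ℂ)*(c j*w β + c β*w j)‖^2
      = Real.pi^2 * normSq (c j*w β) + Real.pi^2 * normSq (c β*w j)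
        + Real.pi^2 * (2 * (c j * w β * (starRingEnd ℂ) (c β * w j)).re) := by
    intro j β
    rw [norm2, Complex.normSq_add]
    ring
  simp only [norm1, h2, Finset.sum_add_distrib]
  have hswap : ∑ j : Fin n, ∑ β : Fin n, Real.pi^2 * normSq (c β * w j)
      = ∑ j : Fin n, ∑ β : Fin n, Real.pi^2 * normSq (c j * w β) := by rw [Finset.sum_comm]
  have expand : ∀ j β : Fin n, c j * w β * (starRingEnd ℂ) (c β * w j)
      = (c β * w β) * (c j * (starRingEnd ℂ) (w j)) := by
    intro j β; rw [map_mul, hc]; ring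
  have hT : ∑ j : Fin n, ∑ β : Fin n, (c j * w β * (starRingEnd ℂ) (c β * w j))
      = ((normSq (∑ j, c j * w j) : ℝ) : ℂ) := by
    have : ∑ j : Fin n, ∑ β : Fin n, (c j * w β * (starRingEnd ℂ) (c β * w j))
        = (∑ β, c β * w β) * (starRingEnd ℂ) (∑ j, c j * w j) := by
      simp only [expand, ← Finset.sum_mul, map_sum]
      rw [Finset.mul_sum]
      apply Finset.sum_congr rfl
      intro j _
      rw [map_mul, hc]
    rw [this, Complex.mul_conj]
  have hTre : ∑ j : Fin n, ∑ β : Fin n,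
      Real.pi^2 * (2 * (c j * w β * (starRingEnd ℂ) (c β * w j)).re)
      = 2 * Real.pi^2 * normSq (∑ j, c j * w j) := by
    simp only [← Finset.mul_sum, ← Complex.re_sum, hT, Complex.ofReal_re]
    ring
  rw [hswap, hTre]
  ring_nf
  simp only [Finset.sum_mul]
open Complex Finset



/-- First Korn inequality in Fourier form (inequality "eq:mik15" on the
Fourier side): for any sequence of Fourier coefficients `v̂ : ℤⁿ → ℂⁿ`,
`∑_ξ ∑_{j,β} |2π ξ_j v̂_β(ξ)|² ≤ 2 ∑_ξ ∑_{j,β} |π(ξ_j v̂_β(ξ) + ξ_β v̂_j(ξ))|²`,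
i.e. the Fourier expression of `‖∇v‖²_{L²(𝕋ⁿ)}` is at most twice that of
`‖𝔼(v)‖²_{L²(𝕋ⁿ)}`, where `𝔼(v)` is the symmetrized gradient. -/
theorem korn_first_inequality_fourier
    (n : ℕ) (hn : 1 ≤ n) (v : (Fin n → ℤ) → Fin n → ℂ) :
    ∑' ξ : Fin n → ℤ, ∑ j : Fin n, ∑ β : Fin n,
        ‖2 * (Real.pi : ℂ) * (ξ j : ℂ) * v ξ β‖ ^ 2 ≤
      2 * ∑' ξ : Fin n → ℤ, ∑ j : Fin n, ∑ β : Fin n,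
        ‖(Real.pi : ℂ) * ((ξ j : ℂ) * v ξ β + (ξ β : ℂ) * v ξ j)‖ ^ 2 := by
  set f : (Fin n → ℤ) → ℝ := fun ξ => ∑ j : Fin n, ∑ β : Fin n,
      ‖2 * (Real.pi : ℂ) * (ξ j : ℂ) * v ξ β‖ ^ 2 with hf
  set g : (Fin n → ℤ) → ℝ := fun ξ => ∑ j : Fin n, ∑ β : Fin n,
      ‖(Real.pi : ℂ) * ((ξ j : ℂ) * v ξ β + (ξ β : ℂ) * v ξ j)‖ ^ 2 with hg
  have hf0 : ∀ ξ, 0 ≤ f ξ := fun ξ => Finset.sum_nonneg fun j _ =>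
    Finset.sum_nonneg fun β _ => by positivity
  have hg0 : ∀ ξ, 0 ≤ g ξ := fun ξ => Finset.sum_nonneg fun j _ =>
    Finset.sum_nonneg fun β _ => by positivity
  have hkey : ∀ ξ, f ξ + 4*Real.pi^2 * normSq (∑ j, (ξ j : ℂ) * v ξ j) = 2 * g ξ := by
    intro ξ
    have := key n (fun j => (ξ j : ℂ)) (v ξ) (fun j => by simp)
    simpa [hf, hg, mul_assoc] using this
  have hfg : ∀ ξ, f ξ ≤ 2 * g ξ := by
    intro ξ
    have h := hkey ξ
    have h2 : 0 ≤ normSq (∑ j, (ξ j : ℂ) * v ξ j) := Complex.normSq_nonneg _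
    nlinarith [Real.pi_pos]
  have hgf : ∀ ξ, g ξ ≤ f ξ := by
    intro ξ
    have hterm : ∀ j β : Fin n,
        ‖(Real.pi : ℂ) * ((ξ j : ℂ) * v ξ β + (ξ β : ℂ) * v ξ j)‖ ^ 2
          ≤ 2*Real.pi^2 * normSq ((ξ j : ℂ) * v ξ β)
            + 2*Real.pi^2 * normSq ((ξ β : ℂ) * v ξ j) := by
      intro j β
      rw [norm2]
      have htri := norm_add_le ((ξ j : ℂ) * v ξ β) ((ξ β : ℂ) * v ξ j)
      have ha : normSq ((ξ j : ℂ) * v ξ β) = ‖(ξ j : ℂ) * v ξ β‖^2 := by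
        rw [Complex.sq_norm]
      have hb : normSq ((ξ β : ℂ) * v ξ j) = ‖(ξ β : ℂ) * v ξ j‖^2 := by
        rw [Complex.sq_norm]
      have hab : normSq ((ξ j : ℂ) * v ξ β + (ξ β : ℂ) * v ξ j)
          = ‖(ξ j : ℂ) * v ξ β + (ξ β : ℂ) * v ξ j‖^2 := by
        rw [Complex.sq_norm]
      rw [ha, hb, hab]
      have hπ : (0:ℝ) ≤ Real.pi^2 := sq_nonneg _
      have hsq := pow_le_pow_left₀ (norm_nonneg _) htri 2
      nlinarith [hsq, sq_nonneg (‖(ξ j : ℂ) * v ξ β‖ - ‖(ξ β : ℂ) * v ξ j‖), hπ,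
        mul_le_mul_of_nonneg_left hsq hπ]
    calc g ξ ≤ ∑ j : Fin n, ∑ β : Fin n, (2*Real.pi^2 * normSq ((ξ j : ℂ) * v ξ β)
            + 2*Real.pi^2 * normSq ((ξ β : ℂ) * v ξ j)) :=
          Finset.sum_le_sum fun j _ => Finset.sum_le_sum fun β _ => hterm j β
      _ = f ξ := by
          simp only [Finset.sum_add_distrib]
          rw [show ∑ j : Fin n, ∑ β : Fin n, 2*Real.pi^2 * normSq ((ξ β : ℂ) * v ξ j)
            = ∑ j : Fin n, ∑ β : Fin n, 2*Real.pi^2 * normSq ((ξ j : ℂ) * v ξ β) from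
            by rw [Finset.sum_comm]]
          simp only [hf]
          rw [← Finset.sum_add_distrib]
          apply Finset.sum_congr rfl; intro j _
          rw [← Finset.sum_add_distrib]
          apply Finset.sum_congr rfl; intro β _
          rw [show 2 * (Real.pi : ℂ) * (ξ j : ℂ) * v ξ β
            = 2 * (Real.pi : ℂ) * ((ξ j : ℂ) * v ξ β) by ring, norm1]
          ring
  by_cases hgs : Summable g
  · have hfs : Summable f := Summable.of_nonneg_of_le hf0 hfg (hgs.mul_left 2)
    rw [← tsum_mul_left]
    exact Summable.tsum_le_tsum hfg hfs (hgs.mul_left 2)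
  · have hfs : ¬ Summable f := fun hfsum =>
      hgs (Summable.of_nonneg_of_le hg0 hgf hfsum)
    rw [tsum_eq_zero_of_not_summable hfs, tsum_eq_zero_of_not_summable hgs]
    simp
end

section
/- The divergence is an isomorphism from the gradient-type subspace of Ḣ^{s+1}_# onto Ḣ^s_#, in Fourier form: let n≥2 and s∈ℝ. The map taking a vector sequence ŵ : ℤⁿ∖{0} → ℂⁿ, with ŵ(ξ) a complex scalar multiple of ξ for every ξ and ∑_{ξ≠0} ϱ(ξ)^{2(s+1)}|ŵ(ξ)|² < ∞, to the scalar sequence ĥ(ξ) := 2πi ξ·ŵ(ξ) is a bijection onto the set of scalar sequences ĥ : ℤⁿ∖{0} → ℂ with ∑_{ξ≠0} ϱ(ξ)^{2s}|ĥ(ξ)|² < ∞; moreover ½ ∑_{ξ≠0} ϱ(ξ)^{2(s+1)}|ŵ(ξ)|² ≤ ∑_{ξ≠0} ϱ(ξ)^{2s}|ĥ(ξ)|² ≤ ∑_{ξ≠0} ϱ(ξ)^{2(s+1)}|ŵ(ξ)|². -/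
open scoped BigOperators

/-- The divergence operator on the Fourier side: `ŵ(ξ) ↦ 2πi ξ·ŵ(ξ)`. -/
noncomputable def fourierDiv {n : ℕ}
    (w : {ξ : Fin n → ℤ // ξ ≠ 0} → Fin n → ℂ)
    (ξ : {ξ : Fin n → ℤ // ξ ≠ 0}) : ℂ :=
  2 * (Real.pi : ℂ) * Complex.I * ∑ i : Fin n, (ξ.1 i : ℂ) * w ξ i

lemma one_le_Q {n : ℕ} (ξ : {ξ : Fin n → ℤ // ξ ≠ 0}) :
    1 ≤ ∑ i, ((ξ.1 i : ℝ)) ^ 2 := by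
  obtain ⟨j, hj⟩ := Function.ne_iff.mp ξ.2
  have hj' : ξ.1 j ≠ 0 := by simpa using hj
  have h1 : (1 : ℝ) ≤ ((ξ.1 j : ℝ)) ^ 2 := by
    have h2 : (1 : ℤ) ≤ (ξ.1 j) ^ 2 := by
      rcases hj'.lt_or_gt with h | h <;> nlinarith
    have : ((1:ℤ):ℝ) ≤ (((ξ.1 j)^2 : ℤ) : ℝ) := Int.cast_le.mpr h2
    push_cast at this
    simpa using this
  calc (1:ℝ) ≤ ((ξ.1 j : ℝ))^2 := h1
    _ ≤ ∑ i, ((ξ.1 i : ℝ))^2 :=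
      Finset.single_le_sum (f := fun i => ((ξ.1 i : ℝ))^2)
        (fun i _ => sq_nonneg _) (Finset.mem_univ j)

lemma fourierDiv_eq {n : ℕ} (w : {ξ : Fin n → ℤ // ξ ≠ 0} → Fin n → ℂ)
    (ξ : {ξ : Fin n → ℤ // ξ ≠ 0}) (c : ℂ) (hc : w ξ = fun i => c * (ξ.1 i : ℂ)) :
    fourierDiv w ξ = 2 * (Real.pi : ℂ) * Complex.I * c *
      ((∑ i, ((ξ.1 i : ℝ)) ^ 2 : ℝ) : ℂ) := by
  simp only [fourierDiv, hc]
  push_cast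
  have : ∑ i : Fin n, (ξ.1 i : ℂ) * (c * (ξ.1 i : ℂ)) = c * ∑ i : Fin n, ((ξ.1 i : ℂ))^2 := by
    rw [Finset.mul_sum]; exact Finset.sum_congr rfl fun i _ => by ring
  rw [this]; ring

lemma sum_norm_sq {n : ℕ} (ξ : {ξ : Fin n → ℤ // ξ ≠ 0}) (c : ℂ) :
    ∑ i, ‖c * (ξ.1 i : ℂ)‖ ^ 2 = ‖c‖^2 * ∑ i, ((ξ.1 i : ℝ)) ^ 2 := by
  rw [Finset.mul_sum]
  refine Finset.sum_congr rfl fun i _ => ?_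
  rw [norm_mul, mul_pow]
  congr 1
  rw [Complex.norm_intCast, sq_abs]

lemma pointwise_bounds {n : ℕ} (s : ℝ) (w : {ξ : Fin n → ℤ // ξ ≠ 0} → Fin n → ℂ)
    (ξ : {ξ : Fin n → ℤ // ξ ≠ 0}) (c : ℂ) (hc : w ξ = fun i => c * (ξ.1 i : ℂ)) :
    (1/2) * (varrho ξ.1 ^ (2*(s+1)) * ∑ i, ‖w ξ i‖^2) ≤
      varrho ξ.1 ^ (2*s) * ‖fourierDiv w ξ‖^2 ∧
    varrho ξ.1 ^ (2*s) * ‖fourierDiv w ξ‖^2 ≤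
      varrho ξ.1 ^ (2*(s+1)) * ∑ i, ‖w ξ i‖^2 := by
  set Q : ℝ := ∑ i, ((ξ.1 i : ℝ))^2 with hQdef
  have hQ1 : 1 ≤ Q := one_le_Q ξ
  have hQ0 : 0 ≤ Q := le_trans zero_le_one hQ1
  have hpos : 0 < varrho ξ.1 := by
    have : 0 < Real.sqrt (1 + Q) := Real.sqrt_pos.mpr (by linarith)
    have := Real.pi_pos
    unfold varrho
    rw [← hQdef]
    positivity
  have hX : 0 ≤ varrho ξ.1 ^ (2*s) := (Real.rpow_pos_of_pos hpos _).le
  have hsum : ∑ i, ‖w ξ i‖^2 = ‖c‖^2 * Q := by rw [hc]; exact sum_norm_sq ξ c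
  have hdivn : ‖fourierDiv w ξ‖^2 = 4 * Real.pi^2 * ‖c‖^2 * Q^2 := by
    rw [fourierDiv_eq w ξ c hc, ← hQdef]
    simp only [norm_mul, Complex.norm_I, Complex.norm_real, Complex.norm_ofNat,
      Real.norm_eq_abs, mul_one]
    rw [abs_of_pos Real.pi_pos, abs_of_nonneg hQ0]
    ring
  have hsplit : varrho ξ.1 ^ (2*(s+1)) = varrho ξ.1 ^ (2*s) * (4 * Real.pi^2 * (1 + Q)) := by
    rw [show 2*(s+1) = 2*s + 2 by ring, Real.rpow_add hpos]
    congr 1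
    rw [show (2:ℝ) = ((2:ℕ):ℝ) by norm_num, Real.rpow_natCast]
    unfold varrho
    rw [← hQdef, mul_pow, mul_pow, Real.sq_sqrt (by linarith)]
    ring
  rw [hsum, hdivn, hsplit]
  have hk : 0 ≤ ‖c‖^2 := sq_nonneg _
  have hkey : 0 ≤ varrho ξ.1 ^ (2*s) * ‖c‖^2 * Real.pi^2 * (Q * (Q - 1)) :=
    mul_nonneg (mul_nonneg (mul_nonneg hX hk) (sq_nonneg _))
      (mul_nonneg hQ0 (by linarith))
  constructor <;> nlinarith [hkey]

/-- The divergence is an isomorphism from the gradient-type subspace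
`Ḣ^{s+1}_{#g}` onto `Ḣ^s_#` (Lemma "div-grad-is", operator "2.37"), in Fourier
form: `ŵ ↦ (ĥ(ξ) = 2πi ξ·ŵ(ξ))` is a bijection from the vector sequences that
are pointwise parallel to `ξ` with `∑ ϱ^{2(s+1)}|ŵ|² < ∞` onto scalar
sequences with `∑ ϱ^{2s}|ĥ|² < ∞`, and
`½ ∑ ϱ^{2(s+1)}|ŵ|² ≤ ∑ ϱ^{2s}|ĥ|² ≤ ∑ ϱ^{2(s+1)}|ŵ|²`. -/
theorem fourier_divergence_isomorphism
    (n : ℕ) (hn : 2 ≤ n) (s : ℝ) :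
    Set.BijOn (fun w => fourierDiv (n := n) w)
      {w : {ξ : Fin n → ℤ // ξ ≠ 0} → Fin n → ℂ |
        (∀ ξ : {ξ : Fin n → ℤ // ξ ≠ 0}, ∃ c : ℂ, w ξ = fun i => c * (ξ.1 i : ℂ)) ∧
        Summable fun ξ : {ξ : Fin n → ℤ // ξ ≠ 0} =>
          varrho ξ.1 ^ (2 * (s + 1)) * ∑ i : Fin n, ‖w ξ i‖ ^ 2}
      {h : {ξ : Fin n → ℤ // ξ ≠ 0} → ℂ |
        Summable fun ξ : {ξ : Fin n → ℤ // ξ ≠ 0} =>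
          varrho ξ.1 ^ (2 * s) * ‖h ξ‖ ^ 2} ∧
    ∀ w : {ξ : Fin n → ℤ // ξ ≠ 0} → Fin n → ℂ,
      (∀ ξ : {ξ : Fin n → ℤ // ξ ≠ 0}, ∃ c : ℂ, w ξ = fun i => c * (ξ.1 i : ℂ)) →
      (Summable fun ξ : {ξ : Fin n → ℤ // ξ ≠ 0} =>
        varrho ξ.1 ^ (2 * (s + 1)) * ∑ i : Fin n, ‖w ξ i‖ ^ 2) →
      (1 / 2) * (∑' ξ : {ξ : Fin n → ℤ // ξ ≠ 0},
          varrho ξ.1 ^ (2 * (s + 1)) * ∑ i : Fin n, ‖w ξ i‖ ^ 2) ≤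
        (∑' ξ : {ξ : Fin n → ℤ // ξ ≠ 0},
          varrho ξ.1 ^ (2 * s) * ‖fourierDiv w ξ‖ ^ 2) ∧
      (∑' ξ : {ξ : Fin n → ℤ // ξ ≠ 0},
          varrho ξ.1 ^ (2 * s) * ‖fourierDiv w ξ‖ ^ 2) ≤
        ∑' ξ : {ξ : Fin n → ℤ // ξ ≠ 0},
          varrho ξ.1 ^ (2 * (s + 1)) * ∑ i : Fin n, ‖w ξ i‖ ^ 2 := by
  have hBnonneg : ∀ (h : {ξ : Fin n → ℤ // ξ ≠ 0} → ℂ) ξ,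
      (0:ℝ) ≤ varrho ξ.1 ^ (2 * s) * ‖h ξ‖ ^ 2 := by
    intro h ξ
    have hpos : 0 < varrho ξ.1 := by
      have h1 : (0:ℝ) < 1 + ∑ i, ((ξ.1 i : ℝ))^2 := by
        have := one_le_Q ξ; linarith
      have := Real.pi_pos
      unfold varrho
      have := Real.sqrt_pos.mpr h1
      positivity
    positivity
  refine ⟨⟨?_, ?_, ?_⟩, ?_⟩
  · -- MapsTo
    rintro w ⟨hpar, hsum⟩
    refine Summable.of_nonneg_of_le (fun ξ => hBnonneg _ ξ) (fun ξ => ?_) hsum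
    obtain ⟨c, hc⟩ := hpar ξ
    exact (pointwise_bounds s w ξ c hc).2
  · -- InjOn
    rintro w1 ⟨hp1, -⟩ w2 ⟨hp2, -⟩ heq
    funext ξ
    obtain ⟨c1, hc1⟩ := hp1 ξ
    obtain ⟨c2, hc2⟩ := hp2 ξ
    have hξ := congrFun heq ξ
    simp only at hξ
    rw [fourierDiv_eq w1 ξ c1 hc1, fourierDiv_eq w2 ξ c2 hc2] at hξ
    have hQ : ((∑ i, ((ξ.1 i : ℝ))^2 : ℝ) : ℂ) ≠ 0 := by
      have := one_le_Q ξ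
      exact_mod_cast (by positivity : ((∑ i, ((ξ.1 i : ℝ))^2 : ℝ)) ≠ 0)
    have hc : c1 = c2 := by
      have hpi : ((Real.pi : ℂ)) ≠ 0 := by exact_mod_cast Real.pi_ne_zero
      have hQ2 : (∑ x : Fin n, ((ξ.1 x : ℂ))^2) ≠ 0 := by push_cast at hQ; exact hQ
      field_simp [hQ2] at hξ
      exact hξ
    rw [hc1, hc2, hc]
  · -- SurjOn
    rintro h hsum
    set c : {ξ : Fin n → ℤ // ξ ≠ 0} → ℂ := fun ξ =>
      h ξ / (2 * (Real.pi : ℂ) * Complex.I * ((∑ i, ((ξ.1 i : ℝ))^2 : ℝ) : ℂ)) with hcdef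
    set w : {ξ : Fin n → ℤ // ξ ≠ 0} → Fin n → ℂ := fun ξ i => c ξ * (ξ.1 i : ℂ) with hwdef
    have hpar : ∀ ξ : {ξ : Fin n → ℤ // ξ ≠ 0}, ∃ d : ℂ, w ξ = fun i => d * (ξ.1 i : ℂ) :=
      fun ξ => ⟨c ξ, rfl⟩
    have hdiv : ∀ ξ, fourierDiv w ξ = h ξ := by
      intro ξ
      have hQ : ((∑ i, ((ξ.1 i : ℝ))^2 : ℝ) : ℂ) ≠ 0 := by
        have := one_le_Q ξ
        exact_mod_cast (by positivity : ((∑ i, ((ξ.1 i : ℝ))^2 : ℝ)) ≠ 0)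
      have hQ2 : (∑ x : Fin n, ((ξ.1 x : ℂ))^2) ≠ 0 := by push_cast at hQ; exact hQ
      have hpi : ((Real.pi : ℂ)) ≠ 0 := by exact_mod_cast Real.pi_ne_zero
      rw [fourierDiv_eq w ξ (c ξ) rfl, hcdef]
      field_simp [hQ2]
    have hAsum : Summable fun ξ : {ξ : Fin n → ℤ // ξ ≠ 0} =>
        varrho ξ.1 ^ (2 * (s + 1)) * ∑ i : Fin n, ‖w ξ i‖ ^ 2 := by
      refine Summable.of_nonneg_of_le (fun ξ => ?_) (fun ξ => ?_) (hsum.mul_left 2)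
      · have hpos : 0 < varrho ξ.1 := by
          have h1 : (0:ℝ) < 1 + ∑ i, ((ξ.1 i : ℝ))^2 := by
            have := one_le_Q ξ; linarith
          have := Real.pi_pos
          unfold varrho
          have := Real.sqrt_pos.mpr h1
          positivity
        have : (0:ℝ) ≤ ∑ i, ‖w ξ i‖^2 :=
          Finset.sum_nonneg fun i _ => sq_nonneg _
        positivity
      · have hb := (pointwise_bounds s w ξ (c ξ) rfl).1
        rw [hdiv ξ] at hb
        linarith
    exact ⟨w, ⟨hpar, hAsum⟩, funext hdiv⟩
  · -- Inequalities
    intro w hpar hsum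
    have hBsum : Summable fun ξ : {ξ : Fin n → ℤ // ξ ≠ 0} =>
        varrho ξ.1 ^ (2 * s) * ‖fourierDiv w ξ‖ ^ 2 := by
      refine Summable.of_nonneg_of_le (fun ξ => hBnonneg _ ξ) (fun ξ => ?_) hsum
      obtain ⟨c, hc⟩ := hpar ξ
      exact (pointwise_bounds s w ξ c hc).2
    constructor
    · rw [← tsum_mul_left]
      refine Summable.tsum_le_tsum (fun ξ => ?_) (hsum.mul_left _) hBsum
      obtain ⟨c, hc⟩ := hpar ξ
      exact (pointwise_bounds s w ξ c hc).1
    · refine Summable.tsum_le_tsum (fun ξ => ?_) hBsum hsum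
      obtain ⟨c, hc⟩ := hpar ξ
      exact (pointwise_bounds s w ξ c hc).2
end
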